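/- arXiv:1102.4246 — 2 statements merged into one kernel-verified Lean document; each statement's English description precedes it below -/
import Mathlib

section
/- Let 𝐚 be a knot sequence in an interval J ⊆ ℝ and fix κ ∈ {1,2,3}. For a ∈ 𝐚 with a < sup J let σ_a be the affine map with σ_a(a) = 0 and σ_a(a₊) = 1, and for n ≥ 2 let Vⁿ(𝐚) be the closure in L²(J) of Sₙ⁰(𝐚) + span{zⁿ ∘ σ_a : a ∈ 𝐚, a < sup J}. Then for every integer k ≥ 0 one has V^{3k+κ}(𝐚) ⊆ V^{3(k+1)+κ}(𝐚), and ⋃_{k≥0} V^{3k+κ}(𝐚) is dense in L²(J). -/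
open MeasureTheory Set Filter

noncomputable section

namespace KnotWavelet

/-- The space `L²(J)` for `J ⊆ ℝ`. -/
abbrev L2S (J : Set ℝ) := Lp ℝ 2 (volume.restrict J)

/-- `f ∈ L²(J)` is supported (a.e.) in `I`. -/
def SuppIn (J : Set ℝ) (f : L2S J) (I : Set ℝ) : Prop :=
  ∀ᵐ x ∂(volume.restrict J), x ∉ I → f x = 0

/-- `G_I`, the members of `G` supported in `I`. -/
def suppSet (J : Set ℝ) (G : Set (L2S J)) (I : Set ℝ) : Set (L2S J) :=
  {g ∈ G | SuppIn J g I}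

/-- For a subspace `V`, the subspace of members supported in `I`. -/
def suppSub (J : Set ℝ) (V : Submodule ℝ (L2S J)) (I : Set ℝ) : Submodule ℝ (L2S J) where
  carrier := {f | f ∈ V ∧ SuppIn J f I}
  zero_mem' := ⟨V.zero_mem, by
    filter_upwards [Lp.coeFn_zero ℝ 2 (volume.restrict J)] with x hx _
    simpa using hx⟩
  add_mem' := by
    rintro f g ⟨hfV, hf⟩ ⟨hgV, hg⟩
    refine ⟨V.add_mem hfV hgV, ?_⟩
    filter_upwards [Lp.coeFn_add f g, hf, hg] with x hx h1 h2 hxI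
    rw [hx]
    simp [Pi.add_apply, h1 hxI, h2 hxI]
  smul_mem' := by
    rintro c f ⟨hfV, hf⟩
    refine ⟨V.smul_mem c hfV, ?_⟩
    filter_upwards [Lp.coeFn_smul c f, hf] with x hx h1 hxI
    rw [hx]
    simp [h1 hxI]

/-- The successor `a₊` of `a` in `ks`, as an extended real (`+∞` if there is none). -/
def succE (ks : Set ℝ) (a : ℝ) : EReal := sInf ((fun x : ℝ => (x : EReal)) '' {b ∈ ks | a < b})

/-- The predecessor `a₋` of `a` in `ks`, as an extended real (`−∞` if there is none). -/
def predE (ks : Set ℝ) (a : ℝ) : EReal := sSup ((fun x : ℝ => (x : EReal)) '' {b ∈ ks | b < a})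

/-- The successor `a₊` of `a` in `ks` as a real number (junk value if there is none). -/
def succR (ks : Set ℝ) (a : ℝ) : ℝ := sInf {b ∈ ks | a < b}

/-- The interval `[a, a₊]`. -/
def IccS (ks : Set ℝ) (a : ℝ) : Set ℝ := {x | a ≤ x ∧ (x : EReal) ≤ succE ks a}

/-- The interval `[a₋, a₊]`. -/
def IccPS (ks : Set ℝ) (a : ℝ) : Set ℝ :=
  {x | predE ks a ≤ (x : EReal) ∧ (x : EReal) ≤ succE ks a}

/-- The interval `[a₋, a]`. -/
def IccP (ks : Set ℝ) (a : ℝ) : Set ℝ := {x | predE ks a ≤ (x : EReal) ∧ x ≤ a}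

/-- The interval `(a, a₊)`. -/
def IooS (ks : Set ℝ) (a : ℝ) : Set ℝ := {x | a < x ∧ (x : EReal) < succE ks a}

/-- The interval `[a₊, ∞)` (empty if `a₊ = +∞`). -/
def IciS (ks : Set ℝ) (a : ℝ) : Set ℝ := {x | succE ks a ≤ (x : EReal)}

/-- `ks` is a knot sequence in the interval `J`: it is a subset of `J` with at least three
elements, has no cluster (accumulation) point in `J`, and `inf ks = inf J`, `sup ks = sup J`
(as extended reals). -/
structure IsKnotSeq (J ks : Set ℝ) : Prop where
  subset : ks ⊆ J
  nontrivial : ∃ x y z : ℝ, x ∈ ks ∧ y ∈ ks ∧ z ∈ ks ∧ x ≠ y ∧ x ≠ z ∧ y ≠ z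
  noCluster : ∀ x ∈ J, ¬ AccPt x (Filter.principal ks)
  inf_eq : sInf ((fun x : ℝ => (x : EReal)) '' ks) = sInf ((fun x : ℝ => (x : EReal)) '' J)
  sup_eq : sSup ((fun x : ℝ => (x : EReal)) '' ks) = sSup ((fun x : ℝ => (x : EReal)) '' J)

/-- `a'` is the successor of `a` in `ks`. -/
def IsSucc (ks : Set ℝ) (a a' : ℝ) : Prop :=
  a ∈ ks ∧ a' ∈ ks ∧ a < a' ∧ ∀ b ∈ ks, b ≤ a ∨ a' ≤ b

/-- A collection `Φ ⊆ L²(J)` is locally finite: on each compact interval `K ⊆ J` all but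
finitely many members of `Φ` vanish (a.e.) on `K`. -/
def LocFin (J : Set ℝ) (Φ : Set (L2S J)) : Prop :=
  ∀ K : Set ℝ, IsCompact K → K ⊆ J →
    {φ ∈ Φ | ¬ ∀ᵐ x ∂(volume.restrict J), x ∈ K → φ x = 0}.Finite

/-- `Φ̆_a := Φ_{[a,a₊]}`. -/
def breveAt (J : Set ℝ) (ks : Set ℝ) (Φ : Set (L2S J)) (a : ℝ) : Set (L2S J) :=
  suppSet J Φ (IccS ks a)

open Classical in
/-- `Φ̆_{a₋}` (the empty set if `a` has no predecessor). -/
def brevePred (J : Set ℝ) (ks : Set ℝ) (Φ : Set (L2S J)) (a : ℝ) : Set (L2S J) :=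
  if {b ∈ ks | b < a}.Nonempty then suppSet J Φ (IccP ks a) else ∅

/-- `Φ_a := Φ_{[a₋,a₊]} \ Φ̆_{a₋}`. -/
def midAt (J : Set ℝ) (ks : Set ℝ) (Φ : Set (L2S J)) (a : ℝ) : Set (L2S J) :=
  suppSet J Φ (IccPS ks a) \ brevePred J ks Φ a

/-- `Φ̄_a := Φ_a \ Φ̆_a`. -/
def barAt (J : Set ℝ) (ks : Set ℝ) (Φ : Set (L2S J)) (a : ℝ) : Set (L2S J) :=
  midAt J ks Φ a \ breveAt J ks Φ a

open Classical in
/-- `Φ̄_{a₊}` (the empty set if `a` has no successor). -/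
def barSucc (J : Set ℝ) (ks : Set ℝ) (Φ : Set (L2S J)) (a : ℝ) : Set (L2S J) :=
  if {b ∈ ks | a < b}.Nonempty then barAt J ks Φ (succR ks a) else ∅

open Classical in
/-- Multiplication by the characteristic function of `I` (restriction to `I`). -/
def indL2 (J : Set ℝ) (I : Set ℝ) (f : L2S J) : L2S J :=
  if h : MeasurableSet I then ((Lp.memLp f).indicator h).toLp (I.indicator f) else 0

/-- `Φ` is a basis centered on the knot sequence `ks`. -/
def CenteredBasis (J ks : Set ℝ) (Φ : Set (L2S J)) : Prop :=
  LocFin J Φ ∧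
  Φ = ⋃ a ∈ ks, midAt J ks Φ a ∧
  ∀ a ∈ ks, LinearIndependent ℝ
    (fun φ : ↥(midAt J ks Φ a ∪ barSucc J ks Φ a) => indL2 J (IccS ks a) (φ : L2S J))

/-- `S(Φ)`: the `L²`-closure of the span of `Φ`. -/
def SClos (J : Set ℝ) (Φ : Set (L2S J)) : Submodule ℝ (L2S J) :=
  (Submodule.span ℝ Φ).topologicalClosure

/-- An orthogonal basis centered on `ks`. -/
def OrthoCenteredBasis (J ks : Set ℝ) (Φ : Set (L2S J)) : Prop :=
  CenteredBasis J ks Φ ∧ Φ.Pairwise fun f g => (inner ℝ f g : ℝ) = 0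

/-- The orthogonal projection onto the closure of a subspace, as a linear map. -/
def projL {H : Type*} [NormedAddCommGroup H] [InnerProductSpace ℝ H] [CompleteSpace H]
    (K : Submodule ℝ H) : H →ₗ[ℝ] H :=
  K.topologicalClosure.subtype ∘ₗ
    (K.topologicalClosure.orthogonalProjectionOnto : H →L[ℝ] K.topologicalClosure).toLinearMap

/-- The image `P_K U` of a subspace `U` under the orthogonal projection onto (the closure of)
`K`. -/
def projSub {H : Type*} [NormedAddCommGroup H] [InnerProductSpace ℝ H] [CompleteSpace H]
    (K U : Submodule ℝ H) : Submodule ℝ H :=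
  U.map (projL K)

/-- The image `(I − P_K) U`. -/
def oneSubProjSub {H : Type*} [NormedAddCommGroup H] [InnerProductSpace ℝ H] [CompleteSpace H]
    (K U : Submodule ℝ H) : Submodule ℝ H :=
  U.map (LinearMap.id - projL K)

/-- Two subspaces are orthogonal. -/
def PerpSub {H : Type*} [NormedAddCommGroup H] [InnerProductSpace ℝ H]
    (U V : Submodule ℝ H) : Prop :=
  ∀ f ∈ U, ∀ g ∈ V, (inner ℝ f g : ℝ) = 0

end KnotWavelet

namespace KnotWavelet

open Classical in
/-- Interpret a plain function as an element of `L²(J)`. -/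
def toL2 (J : Set ℝ) (f : ℝ → ℝ) : L2S J :=
  if h : MemLp f 2 (volume.restrict J) then h.toLp f else 0

/-- `p` is the family of monic ultraspherical polynomials with parameter `5/2`:
`p i` is the monic polynomial of degree `i` orthogonal on `[−1,1]` with respect to the
weight `(1−x²)²` to all polynomials of lower degree. -/
def IsMonicUltraspherical (p : ℕ → Polynomial ℝ) : Prop :=
  ∀ i : ℕ, (p i).Monic ∧ (p i).natDegree = i ∧
    ∀ q : Polynomial ℝ, q.degree < (i : WithBot ℕ) →
      ∫ x in (-1 : ℝ)..1, (1 - x ^ 2) ^ 2 * ((p i).eval x * q.eval x) = 0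

/-- `φ̃ⁿ(x) = x(1−x)·p_{n−2}^{5/2}(2x−1)·χ_{[0,1)}(x)` as a plain function. -/
def phiF (p : ℕ → Polynomial ℝ) (n : ℕ) : ℝ → ℝ := fun x =>
  Set.indicator (Set.Ico (0 : ℝ) 1) (fun y => y * (1 - y) * (p (n - 2)).eval (2 * y - 1)) x

/-- `α_n`. -/
def alphaN (n : ℕ) : ℝ :=
  -((n : ℝ) + 1) / (2 * n + 5) +
    ((n : ℝ) + 3) / (2 * n + 5) *
      Real.sqrt (3 * ((n : ℝ) + 1) * (n + 3) / ((2 * n + 7) * (2 * n + 3)))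

/-- `zⁿ := α_n·φ̃^{n+1} + φ̃^{n+3}` as a plain function. -/
def zF (p : ℕ → Polynomial ℝ) (n : ℕ) : ℝ → ℝ := fun x =>
  alphaN n * phiF p (n + 1) x + phiF p (n + 3) x

/-- The spline space `Sₙ⁰(ks)`: continuous functions in `L²(J)` supported in `J` that are
polynomials of degree at most `n` on each interval `(a, a₊)`, `a ∈ ks`. -/
def SplineSet (J ks : Set ℝ) (n : ℕ) : Set (L2S J) :=
  {f | ∃ g : ℝ → ℝ, ContinuousOn g J ∧ (∀ x ∉ J, g x = 0) ∧
    (∀ a ∈ ks, ∃ q : Polynomial ℝ, q.degree ≤ (n : WithBot ℕ) ∧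
      ∀ x ∈ IooS ks a, g x = q.eval x) ∧
    (⇑f : ℝ → ℝ) =ᵐ[volume.restrict J] g}

/-- `zⁿ ∘ σ_a`, where `σ_a` is the affine map sending `a ↦ 0` and `a₊ ↦ 1`. -/
def ZfunN (J ks : Set ℝ) (p : ℕ → Polynomial ℝ) (n : ℕ) (a : ℝ) : L2S J :=
  toL2 J fun x => zF p n ((x - a) / (succR ks a - a))

/-- `Vⁿ(ks)`: the `L²(J)`-closure of `Sₙ⁰(ks) + span {zⁿ ∘ σ_a : a ∈ ks, a < sup J}`. -/
def Vn (J ks : Set ℝ) (p : ℕ → Polynomial ℝ) (n : ℕ) : Submodule ℝ (L2S J) :=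
  (Submodule.span ℝ
    (SplineSet J ks n ∪
      {f | ∃ a ∈ ks, (∃ y ∈ J, a < y) ∧ f = ZfunN J ks p n a})).topologicalClosure

end KnotWavelet
namespace KnotWavelet

section Succ

variable {J ks : Set ℝ}

lemma succE_le {a b : ℝ} (hb : b ∈ ks) (hab : a < b) : succE ks a ≤ (b : EReal) :=
  sInf_le ⟨b, ⟨hb, hab⟩, rfl⟩

lemma succR_spec (hJ : J.OrdConnected) (hks : IsKnotSeq J ks) {a b : ℝ}
    (ha : a ∈ ks) (hb : b ∈ ks) (hab : a < b) :
    succR ks a ∈ ks ∧ a < succR ks a ∧ (∀ c ∈ ks, a < c → succR ks a ≤ c) ∧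
      succE ks a = (succR ks a : EReal) := by
  set S : Set ℝ := {c | c ∈ ks ∧ a < c} with hS
  have hSne : S.Nonempty := ⟨b, hb, hab⟩
  have hSbd : BddBelow S := ⟨a, fun c hc => hc.2.le⟩
  have har : a ≤ sInf S := le_csInf hSne fun c hc => hc.2.le
  have hrb : sInf S ≤ b := csInf_le hSbd ⟨hb, hab⟩
  have hrJ : sInf S ∈ J := hJ.out (hks.subset ha) (hks.subset hb) ⟨har, hrb⟩
  have hrS : sInf S ∈ S := by
    by_contra hrS
    refine hks.noCluster (sInf S) hrJ ?_
    rw [accPt_iff_nhds]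
    intro U hU
    obtain ⟨ε, hε, hball⟩ := Metric.mem_nhds_iff.1 hU
    obtain ⟨s, hsS, hs⟩ := exists_lt_of_csInf_lt hSne (lt_add_of_pos_right (sInf S) hε)
    have h1 : sInf S ≤ s := csInf_le hSbd hsS
    refine ⟨s, ⟨hball ?_, hsS.1⟩, fun h => hrS (h ▸ hsS)⟩
    rw [Metric.mem_ball, Real.dist_eq, abs_lt]
    constructor <;> linarith
  have hsuccR : succR ks a = sInf S := rfl
  refine ⟨hrS.1, hrS.2, fun c hc hac => csInf_le hSbd ⟨hc, hac⟩, ?_⟩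
  refine le_antisymm (sInf_le ⟨sInf S, hrS, rfl⟩) (le_sInf ?_)
  rintro y ⟨c, hc, rfl⟩
  exact EReal.coe_le_coe_iff.2 (csInf_le hSbd hc)

lemma succE_empty {a : ℝ} (h : ¬ ∃ b ∈ ks, a < b) : succE ks a = ⊤ := by
  have : {b | b ∈ ks ∧ a < b} = ∅ := by
    ext c; simp only [Set.mem_setOf_eq, Set.mem_empty_iff_false, iff_false]
    rintro ⟨h1, h2⟩; exact h ⟨c, h1, h2⟩
  rw [succE, this, Set.image_empty, sInf_empty]

lemma succE_gt (hJ : J.OrdConnected) (hks : IsKnotSeq J ks) {a : ℝ} (ha : a ∈ ks) :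
    (a : EReal) < succE ks a := by
  by_cases h : ∃ b ∈ ks, a < b
  · obtain ⟨b, hb, hab⟩ := h
    obtain ⟨_, h2, _, h4⟩ := succR_spec hJ hks ha hb hab
    rw [h4]
    exact_mod_cast h2
  · rw [succE_empty h]; exact EReal.coe_lt_top a

lemma exists_knot_gt (hks : IsKnotSeq J ks) {a y : ℝ} (hy : y ∈ J) (hay : a < y) :
    ∃ b ∈ ks, a < b := by
  have h1 : (a : EReal) < sSup ((fun x : ℝ => (x : EReal)) '' ks) := by
    rw [hks.sup_eq]
    exact lt_of_lt_of_le (EReal.coe_lt_coe_iff.2 hay) (le_sSup ⟨y, hy, rfl⟩)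
  rw [lt_sSup_iff] at h1
  obtain ⟨z, ⟨b, hb, rfl⟩, hz⟩ := h1
  exact ⟨b, hb, EReal.coe_lt_coe_iff.1 hz⟩

lemma knot_cover (hJ : J.OrdConnected) (hks : IsKnotSeq J ks) {x : ℝ}
    (hx : x ∈ J) (hxks : x ∉ ks) :
    ∃ a ∈ ks, (∃ b ∈ ks, a < b) ∧ a < x ∧ x < succR ks a := by
  set T : Set ℝ := {c | c ∈ ks ∧ c < x} with hT
  have hTne : T.Nonempty := by
    by_contra hTe
    rw [Set.not_nonempty_iff_eq_empty] at hTe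
    have hallge : ∀ b ∈ ks, x < b := by
      intro b hb
      rcases lt_or_ge x b with h | h
      · exact h
      · rcases eq_or_lt_of_le h with h' | h'
        · exact absurd (h' ▸ hb) hxks
        · exfalso
          have hbT : b ∈ T := ⟨hb, h'⟩
          rw [hTe] at hbT
          exact Set.notMem_empty b hbT
    have hinf : sInf ((fun x : ℝ => (x : EReal)) '' ks) = (x : EReal) := by
      refine le_antisymm ?_ (le_sInf ?_)
      · rw [hks.inf_eq]; exact sInf_le ⟨x, hx, rfl⟩
      · rintro y ⟨b, hb, rfl⟩
        exact EReal.coe_le_coe_iff.2 (hallge b hb).le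
    refine hks.noCluster x hx ?_
    rw [accPt_iff_nhds]
    intro U hU
    obtain ⟨ε, hε, hball⟩ := Metric.mem_nhds_iff.1 hU
    have hlt : sInf ((fun x : ℝ => (x : EReal)) '' ks) < ((x + ε : ℝ) : EReal) := by
      rw [hinf]; exact EReal.coe_lt_coe_iff.2 (lt_add_of_pos_right x hε)
    rw [sInf_lt_iff] at hlt
    obtain ⟨z, ⟨b, hb, rfl⟩, hz⟩ := hlt
    have hbx : x < b := hallge b hb
    have hbε : b < x + ε := EReal.coe_lt_coe_iff.1 hz
    refine ⟨b, ⟨hball ?_, hb⟩, ne_of_gt hbx⟩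
    rw [Metric.mem_ball, Real.dist_eq, abs_lt]
    constructor <;> linarith
  have hTbd : BddAbove T := ⟨x, fun c hc => hc.2.le⟩
  obtain ⟨b1, hb1⟩ := hTne
  have hs1 : b1 ≤ sSup T := le_csSup hTbd hb1
  have hs2 : sSup T ≤ x := csSup_le ⟨b1, hb1⟩ fun c hc => hc.2.le
  have hsJ : sSup T ∈ J := hJ.out (hks.subset hb1.1) hx ⟨hs1, hs2⟩
  have hsT : sSup T ∈ T := by
    by_contra hsT
    refine hks.noCluster (sSup T) hsJ ?_
    rw [accPt_iff_nhds]
    intro U hU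
    obtain ⟨ε, hε, hball⟩ := Metric.mem_nhds_iff.1 hU
    obtain ⟨t, htT, ht⟩ := exists_lt_of_lt_csSup ⟨b1, hb1⟩ (sub_lt_self (sSup T) hε)
    have h1 : t ≤ sSup T := le_csSup hTbd htT
    refine ⟨t, ⟨hball ?_, htT.1⟩, fun h => hsT (h ▸ htT)⟩
    rw [Metric.mem_ball, Real.dist_eq, abs_lt]
    constructor <;> linarith
  have hex : ∃ b ∈ ks, sSup T < b := exists_knot_gt hks hx hsT.2
  obtain ⟨b2, hb2, hb2'⟩ := hex
  obtain ⟨hr1, hr2, hr3, _⟩ := succR_spec hJ hks hsT.1 hb2 hb2'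
  refine ⟨sSup T, hsT.1, ⟨b2, hb2, hb2'⟩, hsT.2, ?_⟩
  by_contra hxr
  push_neg at hxr
  rcases eq_or_lt_of_le hxr with h' | h'
  · exact hxks (h' ▸ hr1)
  · exact absurd (le_csSup hTbd (show succR ks (sSup T) ∈ T from ⟨hr1, h'⟩)) (not_le.2 hr2)

lemma ks_countable (hJ : J.OrdConnected) (hks : IsKnotSeq J ks) : ks.Countable := by
  have : Set.PairwiseDisjoint ks
      (fun a => Set.Ioo a (a + 1) ∩ ((fun x : ℝ => (x : EReal)) ⁻¹' Set.Iio (succE ks a))) := by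
    have key : ∀ a ∈ ks, ∀ b ∈ ks, a < b →
        Disjoint (Set.Ioo a (a + 1) ∩ ((fun x : ℝ => (x : EReal)) ⁻¹' Set.Iio (succE ks a)))
          (Set.Ioo b (b + 1) ∩ ((fun x : ℝ => (x : EReal)) ⁻¹' Set.Iio (succE ks b))) := by
      intro a _ b hb hab
      rw [Set.disjoint_left]
      rintro t ⟨⟨_, _⟩, ht2⟩ ⟨⟨hb1, _⟩, _⟩
      have : (t : EReal) < (b : EReal) := lt_of_lt_of_le ht2 (succE_le hb hab)
      exact absurd hb1 (not_lt.2 (EReal.coe_lt_coe_iff.1 this).le)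
    intro a ha b hb hab
    rcases lt_or_gt_of_ne hab with h | h
    · exact key a ha b hb h
    · exact (key b hb a ha h).symm
  refine this.countable_of_isOpen (fun a _ => ?_) (fun a ha => ?_)
  · exact (isOpen_Ioo).inter (isOpen_Iio.preimage continuous_coe_real_ereal)
  · by_cases h : ∃ b ∈ ks, a < b
    · obtain ⟨b, hb, hab⟩ := h
      obtain ⟨_, h2, _, h4⟩ := succR_spec hJ hks ha hb hab
      refine ⟨min (a + 1/2) ((a + succR ks a)/2), ⟨lt_min (by linarith) (by linarith), ?_⟩, ?_⟩
      · exact lt_of_le_of_lt (min_le_left _ _) (by linarith)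
      · rw [Set.mem_preimage, Set.mem_Iio, h4]
        exact EReal.coe_lt_coe_iff.2 (lt_of_le_of_lt (min_le_right _ _) (by linarith))
    · refine ⟨a + 1/2, ⟨by constructor <;> linarith, ?_⟩⟩
      rw [Set.mem_preimage, Set.mem_Iio, succE_empty h]
      exact EReal.coe_lt_top _

end Succ

end KnotWavelet
namespace KnotWavelet

section Spline

variable {J ks : Set ℝ}

open Classical in
lemma toL2_coeFn {f : ℝ → ℝ} (h : MemLp f 2 (volume.restrict J)) :
    ⇑(toL2 J f) =ᵐ[volume.restrict J] f := by
  rw [toL2, dif_pos h]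
  exact h.coeFn_toLp

/-- Indicator of `Icc c d` of a continuous function vanishing at the endpoints is continuous. -/
lemma continuous_indicator_Icc {c d : ℝ} (hcd : c < d) {G : ℝ → ℝ} (hG : Continuous G)
    (h0 : G c = 0) (h1 : G d = 0) :
    Continuous (Set.indicator (Set.Icc c d) G) := by
  classical
  have : Set.indicator (Set.Icc c d) G = fun x => if x ∈ Set.Icc c d then G x else 0 := by
    funext x; simp [Set.indicator_apply]
  rw [this]
  refine Continuous.if ?_ hG continuous_const
  intro x hx
  have : frontier {x | x ∈ Set.Icc c d} = {c, d} := by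
    rw [show {x | x ∈ Set.Icc c d} = Set.Icc c d from rfl, frontier_Icc hcd.le]
  rw [this] at hx
  rcases hx with h | h
  · rw [h, h0]
  · rw [Set.mem_singleton_iff] at h; rw [h, h1]

lemma indicator_Ioo_eq_Icc {c d : ℝ} {G : ℝ → ℝ} (h0 : G c = 0) (h1 : G d = 0) :
    Set.indicator (Set.Ioo c d) G = Set.indicator (Set.Icc c d) G := by
  funext x
  by_cases hx : x ∈ Set.Ioo c d
  · rw [Set.indicator_of_mem hx, Set.indicator_of_mem (Set.Ioo_subset_Icc_self hx)]
  · rw [Set.indicator_of_notMem hx]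
    by_cases hx' : x ∈ Set.Icc c d
    · rw [Set.indicator_of_mem hx']
      rcases eq_or_lt_of_le hx'.1 with h | h
      · rw [← h, h0]
      rcases eq_or_lt_of_le hx'.2 with h' | h'
      · rw [h', h1]
      · exact absurd ⟨h, h'⟩ hx
    · rw [Set.indicator_of_notMem hx']

/-- Membership in the spline space for functions supported on one knot interval. -/
lemma mem_splineSet (hJ : J.OrdConnected) (hks : IsKnotSeq J ks) {a : ℝ} (ha : a ∈ ks)
    (hex : ∃ b ∈ ks, a < b) {G : ℝ → ℝ} (hGc : Continuous G)
    (hG0 : ∀ x, x ∉ Set.Ioo a (succR ks a) → G x = 0)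
    {n : ℕ} {Q : Polynomial ℝ} (hdeg : Q.degree ≤ (n : WithBot ℕ))
    (hGQ : ∀ x ∈ Set.Ioo a (succR ks a), G x = Q.eval x) :
    toL2 J G ∈ SplineSet J ks n := by
  obtain ⟨b, hb, hab⟩ := hex
  obtain ⟨hr1, hr2, hr3, hr4⟩ := succR_spec hJ hks ha hb hab
  set r := succR ks a with hrdef
  have hIccJ : Set.Icc a r ⊆ J := hJ.out (hks.subset ha) (hks.subset hr1)
  have hmem : MemLp G 2 (volume.restrict J) := by
    have hcs : HasCompactSupport G := by
      refine IsCompact.of_isClosed_subset (isCompact_Icc (a := a) (b := r)) isClosed_closure ?_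
      refine closure_minimal ?_ isClosed_Icc
      intro x hx
      by_contra hxI
      exact hx (hG0 x fun h => hxI (Set.Ioo_subset_Icc_self h))
    exact (hGc.memLp_of_hasCompactSupport hcs).restrict J
  refine ⟨G, hGc.continuousOn, ?_, ?_, toL2_coeFn hmem⟩
  · intro x hxJ
    refine hG0 x fun hx => hxJ (hIccJ (Set.Ioo_subset_Icc_self hx))
  · intro c hc
    by_cases hca : c = a
    · subst hca
      refine ⟨Q, hdeg, ?_⟩
      intro x hx
      refine hGQ x ?_
      obtain ⟨hx1, hx2⟩ := hx
      rw [hr4] at hx2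
      exact ⟨hx1, EReal.coe_lt_coe_iff.1 hx2⟩
    · refine ⟨0, by simp [Polynomial.degree_zero], ?_⟩
      intro x hx
      rw [Polynomial.eval_zero]
      refine hG0 x ?_
      rintro ⟨hx1, hx2⟩
      rcases lt_or_gt_of_ne hca with h | h
      · -- c < a : x < succE ks c ≤ a
        have : (x : EReal) < (a : EReal) := lt_of_lt_of_le hx.2 (succE_le ha h)
        exact absurd hx1 (not_lt.2 (EReal.coe_lt_coe_iff.1 this).le)
      · -- a < c : r ≤ c < x
        have : r ≤ c := hr3 c hc h
        exact absurd hx2 (not_lt.2 (by linarith [hx.1]))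

lemma splineSet_mono {m n : ℕ} (h : m ≤ n) : SplineSet J ks m ⊆ SplineSet J ks n := by
  rintro f ⟨g, h1, h2, h3, h4⟩
  refine ⟨g, h1, h2, fun a ha => ?_, h4⟩
  obtain ⟨q, hq1, hq2⟩ := h3 a ha
  exact ⟨q, le_trans hq1 (by exact_mod_cast h), hq2⟩

end Spline

end KnotWavelet
namespace KnotWavelet

section ZSpline

variable {J ks : Set ℝ}

lemma phiF_eq_indicator_Icc (p : ℕ → Polynomial ℝ) (m : ℕ) :
    phiF p m = Set.indicator (Set.Icc (0:ℝ) 1)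
      (fun y => y * (1 - y) * (p (m - 2)).eval (2 * y - 1)) := by
  funext y
  rw [phiF]
  by_cases h : y ∈ Set.Ico (0:ℝ) 1
  · rw [Set.indicator_of_mem h, Set.indicator_of_mem (Set.Ico_subset_Icc_self h)]
  · rw [Set.indicator_of_notMem h]
    by_cases h' : y ∈ Set.Icc (0:ℝ) 1
    · have hy1 : y = 1 := by
        rcases eq_or_lt_of_le h'.2 with h2 | h2
        · exact h2
        · exact absurd ⟨h'.1, h2⟩ h
      rw [Set.indicator_of_mem h', hy1]; ring
    · rw [Set.indicator_of_notMem h']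

lemma phiF_continuous (p : ℕ → Polynomial ℝ) (m : ℕ) : Continuous (phiF p m) := by
  rw [phiF_eq_indicator_Icc]
  refine continuous_indicator_Icc one_pos ?_ (by ring) (by ring)
  have : Continuous fun y : ℝ => (p (m - 2)).eval (2 * y - 1) :=
    (p (m - 2)).continuous.comp (by continuity)
  exact (continuous_id.mul (continuous_const.sub continuous_id)).mul this

lemma zF_continuous (p : ℕ → Polynomial ℝ) (n : ℕ) : Continuous (zF p n) :=
  (continuous_const.mul (phiF_continuous p (n+1))).add (phiF_continuous p (n+3))

lemma phiF_zero (p : ℕ → Polynomial ℝ) (m : ℕ) {y : ℝ} (hy : y ∉ Set.Ioo (0:ℝ) 1) :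
    phiF p m y = 0 := by
  rw [phiF]
  by_cases h : y ∈ Set.Ico (0:ℝ) 1
  · rw [Set.indicator_of_mem h]
    have : y = 0 := by
      rcases eq_or_lt_of_le h.1 with h2 | h2
      · exact h2.symm
      · exact absurd ⟨h2, h.2⟩ hy
    rw [this]; ring
  · rw [Set.indicator_of_notMem h]

lemma zF_zero (p : ℕ → Polynomial ℝ) (n : ℕ) {y : ℝ} (hy : y ∉ Set.Ioo (0:ℝ) 1) :
    zF p n y = 0 := by
  rw [zF, phiF_zero p _ hy, phiF_zero p _ hy]; ring

/-- The polynomial representing `zF` on `[0,1]`. -/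
def Zpoly (p : ℕ → Polynomial ℝ) (n : ℕ) : Polynomial ℝ :=
  Polynomial.C (alphaN n) *
      (Polynomial.X * (1 - Polynomial.X) *
        ((p (n + 1 - 2)).comp (Polynomial.C 2 * Polynomial.X - Polynomial.C 1))) +
    Polynomial.X * (1 - Polynomial.X) *
      ((p (n + 3 - 2)).comp (Polynomial.C 2 * Polynomial.X - Polynomial.C 1))

lemma zF_eval (p : ℕ → Polynomial ℝ) (n : ℕ) {y : ℝ} (hy : y ∈ Set.Ico (0:ℝ) 1) :
    zF p n y = (Zpoly p n).eval y := by
  rw [zF, Zpoly, phiF, phiF, Set.indicator_of_mem hy, Set.indicator_of_mem hy]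
  simp [Polynomial.eval_comp]

lemma Zpoly_natDegree (p : ℕ → Polynomial ℝ) (hp : IsMonicUltraspherical p) (n : ℕ) :
    (Zpoly p n).natDegree ≤ n + 3 := by
  have hin : (Polynomial.C (2:ℝ) * Polynomial.X - Polynomial.C 1).natDegree ≤ 1 := by
    refine le_trans (Polynomial.natDegree_sub_le _ _) (max_le ?_ (by simp))
    exact le_trans (Polynomial.natDegree_mul_le) (by simp)
  have key : ∀ m : ℕ, (Polynomial.X * (1 - Polynomial.X) *
      ((p m).comp (Polynomial.C 2 * Polynomial.X - Polynomial.C 1)) : Polynomial ℝ).natDegree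
        ≤ m + 2 := by
    intro m
    refine le_trans (Polynomial.natDegree_mul_le) ?_
    have h1 : (Polynomial.X * (1 - Polynomial.X) : Polynomial ℝ).natDegree ≤ 2 := by
      refine le_trans (Polynomial.natDegree_mul_le) ?_
      have : (1 - Polynomial.X : Polynomial ℝ).natDegree ≤ 1 := by
        refine le_trans (Polynomial.natDegree_sub_le _ _) ?_
        simp
      simp only [Polynomial.natDegree_X]
      omega
    have h2 : ((p m).comp (Polynomial.C 2 * Polynomial.X - Polynomial.C 1)).natDegree ≤ m := by
      refine le_trans (Polynomial.natDegree_comp_le) ?_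
      rw [(hp m).2.1]
      calc m * (Polynomial.C (2:ℝ) * Polynomial.X - Polynomial.C 1).natDegree ≤ m * 1 :=
            Nat.mul_le_mul_left m hin
        _ = m := by omega
    omega
  refine le_trans (Polynomial.natDegree_add_le _ _) ?_
  have ha : (Polynomial.C (alphaN n) *
      (Polynomial.X * (1 - Polynomial.X) *
        ((p (n + 1 - 2)).comp (Polynomial.C 2 * Polynomial.X - Polynomial.C 1)))).natDegree
        ≤ n + 3 := by
    refine le_trans (Polynomial.natDegree_mul_le) ?_
    have := key (n + 1 - 2)
    simp only [Polynomial.natDegree_C]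
    omega
  have hb := key (n + 3 - 2)
  omega

lemma zfun_mem_splineSet (hJ : J.OrdConnected) (hks : IsKnotSeq J ks)
    {p : ℕ → Polynomial ℝ} (hp : IsMonicUltraspherical p) {a : ℝ} (ha : a ∈ ks)
    (hy : ∃ y ∈ J, a < y) {n : ℕ} :
    ZfunN J ks p n a ∈ SplineSet J ks (n + 3) := by
  obtain ⟨y, hyJ, hay⟩ := hy
  have hex : ∃ b ∈ ks, a < b := exists_knot_gt hks hyJ hay
  obtain ⟨b, hb, hab⟩ := hex
  obtain ⟨hr1, hr2, hr3, hr4⟩ := succR_spec hJ hks ha hb hab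
  set r := succR ks a with hrdef
  have hs : (0:ℝ) < r - a := by linarith
  set σ : ℝ → ℝ := fun x => (x - a) / (r - a) with hσ
  set ℓ : Polynomial ℝ := Polynomial.C (r - a)⁻¹ * (Polynomial.X - Polynomial.C a) with hℓ
  have hℓeval : ∀ x : ℝ, ℓ.eval x = σ x := by
    intro x; simp [hℓ, hσ, div_eq_inv_mul]
  set Q : Polynomial ℝ := (Zpoly p n).comp ℓ with hQ
  have hdeg : Q.degree ≤ ((n + 3 : ℕ) : WithBot ℕ) := by
    refine le_trans (Polynomial.degree_le_natDegree) ?_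
    have h1 : Q.natDegree ≤ n + 3 := by
      refine le_trans (Polynomial.natDegree_comp_le) ?_
      have hℓdeg : ℓ.natDegree ≤ 1 := by
        refine le_trans (Polynomial.natDegree_mul_le) ?_
        simp [Polynomial.natDegree_X_sub_C]
      calc (Zpoly p n).natDegree * ℓ.natDegree ≤ (n + 3) * 1 :=
            Nat.mul_le_mul (Zpoly_natDegree p hp n) hℓdeg
        _ = n + 3 := by omega
    exact_mod_cast h1
  have hσmem : ∀ x ∈ Set.Ioo a r, σ x ∈ Set.Ioo (0:ℝ) 1 := by
    rintro x ⟨h1, h2⟩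
    constructor
    · exact div_pos (by linarith) hs
    · rw [div_lt_one hs]; linarith
  have hσnot : ∀ x, x ∉ Set.Ioo a r → σ x ∉ Set.Ioo (0:ℝ) 1 := by
    intro x hx hmem
    obtain ⟨h1, h2⟩ := hmem
    rw [lt_div_iff₀ hs] at h1
    rw [div_lt_one hs] at h2
    exact hx ⟨by linarith, by linarith⟩
  rw [ZfunN]
  refine mem_splineSet hJ hks ha ⟨b, hb, hab⟩ ?_ ?_ hdeg ?_
  · exact (zF_continuous p n).comp (by continuity)
  · intro x hx
    exact zF_zero p n (hσnot x hx)
  · intro x hx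
    have h1 : zF p n (σ x) = (Zpoly p n).eval (σ x) :=
      zF_eval p n (Set.Ioo_subset_Ico_self (hσmem x hx))
    rw [← hrdef]
    show zF p n (σ x) = Q.eval x
    rw [h1, hQ, Polynomial.eval_comp, hℓeval]

lemma bubble_mem_splineSet (hJ : J.OrdConnected) (hks : IsKnotSeq J ks) {a : ℝ} (ha : a ∈ ks)
    (hex : ∃ b ∈ ks, a < b) (q : Polynomial ℝ) {n : ℕ} (hn : q.natDegree + 2 ≤ n) :
    toL2 J (Set.indicator (Set.Ioo a (succR ks a))
      (fun x => (x - a) * (succR ks a - x) * q.eval x)) ∈ SplineSet J ks n := by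
  obtain ⟨b, hb, hab⟩ := hex
  obtain ⟨hr1, hr2, hr3, hr4⟩ := succR_spec hJ hks ha hb hab
  set r := succR ks a with hrdef
  set W : ℝ → ℝ := fun x => (x - a) * (r - x) * q.eval x with hW
  have hWc : Continuous W := by
    refine (((continuous_id.sub continuous_const).mul
      (continuous_const.sub continuous_id)).mul q.continuous)
  set Q : Polynomial ℝ := (Polynomial.X - Polynomial.C a) * (Polynomial.C r - Polynomial.X) * q
    with hQ
  have hdeg : Q.degree ≤ ((n : ℕ) : WithBot ℕ) := by
    refine le_trans (Polynomial.degree_le_natDegree) ?_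
    have h1 : Q.natDegree ≤ n := by
      refine le_trans (Polynomial.natDegree_mul_le) ?_
      have h2 : ((Polynomial.X - Polynomial.C a) * (Polynomial.C r - Polynomial.X) :
          Polynomial ℝ).natDegree ≤ 2 := by
        refine le_trans (Polynomial.natDegree_mul_le) ?_
        have h3 : (Polynomial.C r - Polynomial.X : Polynomial ℝ).natDegree ≤ 1 := by
          refine le_trans (Polynomial.natDegree_sub_le _ _) ?_
          simp
        simp [Polynomial.natDegree_X_sub_C]
        omega
      omega
    exact_mod_cast h1
  refine mem_splineSet hJ hks ha ⟨b, hb, hab⟩ ?_ ?_ hdeg ?_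
  · rw [indicator_Ioo_eq_Icc (by simp [hW]) (by simp [hW])]
    exact continuous_indicator_Icc hr2 hWc (by simp [hW]) (by simp [hW])
  · intro x hx
    rw [← hrdef] at hx
    exact Set.indicator_of_notMem hx W
  · intro x hx
    rw [← hrdef] at hx
    rw [Set.indicator_of_mem hx W, hW, hQ]
    simp

end ZSpline

end KnotWavelet
namespace KnotWavelet

section Density

/-- If `F ∈ L²(a,r)` is orthogonal to all polynomials, then `F = 0` a.e. on `(a,r)`. -/
lemma ae_zero_of_polys {a r : ℝ} (har : a < r) {F : ℝ → ℝ}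
    (hF : MemLp F 2 (volume.restrict (Set.Ioo a r)))
    (h : ∀ q : Polynomial ℝ, ∫ x, F x * q.eval x ∂(volume.restrict (Set.Ioo a r)) = 0) :
    ∀ᵐ x ∂(volume.restrict (Set.Ioo a r)), F x = 0 := by
  set μ' := volume.restrict (Set.Ioo a r) with hμ'
  haveI : IsFiniteMeasure μ' := ⟨by rw [hμ', Measure.restrict_apply_univ]; exact measure_Ioo_lt_top⟩
  haveI : μ'.WeaklyRegular :=
    MeasureTheory.Measure.WeaklyRegular.restrict_of_measure_ne_top measure_Ioo_lt_top.ne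
  have hq : ∀ q : Polynomial ℝ, MemLp (fun x => q.eval x) 2 μ' := by
    intro q
    obtain ⟨C, hC⟩ := (isCompact_Icc (a := a) (b := r)).exists_bound_of_continuousOn
      (q.continuous.continuousOn (s := Set.Icc a r))
    refine MemLp.of_bound (q.continuous.aestronglyMeasurable) C ?_
    filter_upwards [ae_restrict_mem measurableSet_Ioo] with x hx
    exact hC x (Set.Ioo_subset_Icc_self hx)
  set Flp := hF.toLp F with hFlp
  set P : Set (Lp ℝ 2 μ') := Set.range (fun q : Polynomial ℝ => (hq q).toLp _) with hP
  have hdense : Dense P := by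
    have hbcf := MeasureTheory.Lp.boundedContinuousFunction_dense (E := ℝ) (μ := μ') (p := 2)
      (by norm_num : (2 : ENNReal) ≠ ⊤)
    have h1 : (MeasureTheory.Lp.boundedContinuousFunction ℝ 2 μ' : Set (Lp ℝ 2 μ'))
        ⊆ closure P := by
      intro g hg
      rw [SetLike.mem_coe, MeasureTheory.Lp.mem_boundedContinuousFunction_iff] at hg
      obtain ⟨b, hb⟩ := hg
      have hgb : ⇑g =ᵐ[μ'] ⇑b := by
        have h2 : ⇑(b.toContinuousMap.toAEEqFun μ') =ᵐ[μ'] ⇑b :=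
          ContinuousMap.coeFn_toAEEqFun μ' b.toContinuousMap
        rw [hb] at h2
        exact h2
      rw [Metric.mem_closure_iff]
      intro ε hε
      set M : ℝ := (measureUnivNNReal μ' : ℝ) ^ ((2 : ENNReal).toReal)⁻¹ with hM
      have hM0 : 0 ≤ M := Real.rpow_nonneg (NNReal.coe_nonneg _) _
      set ε' : ℝ := ε / (2 * (M + 1)) with hε'
      have hε'0 : 0 < ε' := by
        apply div_pos hε
        nlinarith
      -- Weierstrass approximation on [a, r]
      set bc : C(Set.Icc a r, ℝ) :=
        ⟨fun x => b x, b.continuous.comp continuous_subtype_val⟩ with hbc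
      have hmem : bc ∈ closure ((polynomialFunctions (Set.Icc a r) : Set (C(Set.Icc a r, ℝ)))) := by
        have : bc ∈ (polynomialFunctions (Set.Icc a r)).topologicalClosure := by
          rw [polynomialFunctions_closure_eq_top]; trivial
        rwa [← Subalgebra.topologicalClosure_coe]
      rw [Metric.mem_closure_iff] at hmem
      obtain ⟨pf, hpf, hpfd⟩ := hmem ε' hε'0
      rw [SetLike.mem_coe, ← Subalgebra.mem_carrier] at hpf
      have hpf' : pf ∈ (polynomialFunctions (Set.Icc a r) : Set (C(Set.Icc a r, ℝ))) := hpf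
      rw [polynomialFunctions_coe] at hpf'
      obtain ⟨q, hq'⟩ := hpf'
      refine ⟨(hq q).toLp _, ⟨q, rfl⟩, ?_⟩
      have hbound : ∀ᵐ x ∂μ', ‖g x - q.eval x‖ ≤ ε' := by
        filter_upwards [ae_restrict_mem measurableSet_Ioo, hgb] with x hx hgbx
        have hxI : x ∈ Set.Icc a r := Set.Ioo_subset_Icc_self hx
        have : q.eval x = pf ⟨x, hxI⟩ := by
          rw [← hq']; rfl
        rw [hgbx, this]
        have := ContinuousMap.dist_apply_le_dist (f := bc) (g := pf) ⟨x, hxI⟩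
        have hdb : dist (bc ⟨x, hxI⟩) (pf ⟨x, hxI⟩) ≤ ε' := le_of_lt (lt_of_le_of_lt this hpfd)
        rw [Real.dist_eq] at hdb
        simpa [hbc] using hdb
      have hdist : dist g ((hq q).toLp _) ≤ M * ε' := by
        rw [dist_eq_norm]
        have hsub : ∀ᵐ x ∂μ', ‖(g - (hq q).toLp _) x‖ ≤ ε' := by
          filter_upwards [Lp.coeFn_sub g ((hq q).toLp _), (hq q).coeFn_toLp, hbound]
            with x h1 h2 h3
          rw [h1, Pi.sub_apply, h2]
          exact h3
        exact MeasureTheory.Lp.norm_le_of_ae_bound hε'0.le hsub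
      refine lt_of_le_of_lt hdist ?_
      rw [hε']
      rw [div_eq_inv_mul, ← mul_assoc]
      have h2M : M * (2 * (M + 1))⁻¹ < 1 := by
        rw [mul_inv_lt_iff₀ (by nlinarith)]
        nlinarith
      nlinarith
    intro x
    have hx := hbcf x
    have := closure_mono h1 hx
    rwa [closure_closure] at this
  have hinner : ∀ G ∈ P, (inner ℝ Flp G : ℝ) = 0 := by
    rintro G ⟨q, rfl⟩
    rw [MeasureTheory.L2.inner_def]
    rw [show (0:ℝ) = ∫ x, F x * q.eval x ∂μ' from (h q).symm]
    apply integral_congr_ae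
    filter_upwards [hF.coeFn_toLp, (hq q).coeFn_toLp] with x h1 h2
    rw [RCLike.inner_apply]
    simp only [h1, h2, starRingEnd_apply, star_trivial]
    rw [mul_comm, hFlp, h1]
  have hzero : ∀ G : Lp ℝ 2 μ', (inner ℝ Flp G : ℝ) = 0 := by
    have hc : Continuous fun G : Lp ℝ 2 μ' => (inner ℝ Flp G : ℝ) :=
      continuous_const.inner continuous_id
    have heq : Set.EqOn (fun G : Lp ℝ 2 μ' => (inner ℝ Flp G : ℝ)) (fun _ => (0:ℝ)) P :=
      fun G hG => hinner G hG
    have := Continuous.ext_on hdense hc continuous_const heq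
    intro G
    exact congrFun this G
  have hFlp0 : Flp = 0 := by
    rw [← inner_self_eq_zero (𝕜 := ℝ)]
    exact hzero Flp
  have := hF.coeFn_toLp
  rw [← hFlp, hFlp0] at this
  filter_upwards [this.symm, Lp.coeFn_zero ℝ 2 μ'] with x h1 h2
  rw [h1]
  exact h2

end Density

end KnotWavelet
namespace KnotWavelet

section Assemble

variable {J ks : Set ℝ}

lemma Vn_step (hJ : J.OrdConnected) (hks : IsKnotSeq J ks)
    {p : ℕ → Polynomial ℝ} (hp : IsMonicUltraspherical p) (n : ℕ) :
    Vn J ks p n ≤ Vn J ks p (n + 3) := by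
  refine Submodule.topologicalClosure_mono (Submodule.span_mono ?_)
  intro f hf
  rcases hf with hf | hf
  · exact Set.mem_union_left _ (splineSet_mono (by omega) hf)
  · obtain ⟨a, ha, hy, rfl⟩ := hf
    exact Set.mem_union_left _ (zfun_mem_splineSet hJ hks hp ha hy)

lemma memℒp_of_cont_supp {G : ℝ → ℝ} (hGc : Continuous G) {c d : ℝ}
    (hG0 : ∀ x, x ∉ Set.Ioo c d → G x = 0) : MemLp G 2 (volume.restrict J) := by
  have hcs : HasCompactSupport G := by
    refine IsCompact.of_isClosed_subset (isCompact_Icc (a := c) (b := d)) isClosed_closure ?_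
    refine closure_minimal ?_ isClosed_Icc
    intro x hx
    by_contra hxI
    exact hx (hG0 x fun h => hxI (Set.Ioo_subset_Icc_self h))
  exact (hGc.memLp_of_hasCompactSupport hcs).restrict J

lemma f_ae_zero_Ioo (hJ : J.OrdConnected) (hks : IsKnotSeq J ks) {a : ℝ} (ha : a ∈ ks)
    (hex : ∃ b ∈ ks, a < b) (f : L2S J)
    (horth : ∀ q : Polynomial ℝ,
      (inner ℝ (toL2 J (Set.indicator (Set.Ioo a (succR ks a))
        (fun x => (x - a) * (succR ks a - x) * q.eval x))) f : ℝ) = 0) :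
    ∀ᵐ x ∂(volume.restrict (Set.Ioo a (succR ks a))), f x = 0 := by
  obtain ⟨b, hb, hab⟩ := hex
  obtain ⟨hr1, hr2, hr3, hr4⟩ := succR_spec hJ hks ha hb hab
  set r := succR ks a with hrdef
  have hIccJ : Set.Icc a r ⊆ J := hJ.out (hks.subset ha) (hks.subset hr1)
  have hIooJ : Set.Ioo a r ⊆ J := fun x hx => hIccJ (Set.Ioo_subset_Icc_self hx)
  have hrr : (volume.restrict J).restrict (Set.Ioo a r) = volume.restrict (Set.Ioo a r) := by
    rw [Measure.restrict_restrict measurableSet_Ioo, Set.inter_eq_self_of_subset_left hIooJ]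
  -- the weighted function
  set F : ℝ → ℝ := fun x => f x * ((x - a) * (r - x)) with hFdef
  have hFmem : MemLp F 2 (volume.restrict (Set.Ioo a r)) := by
    have hfm : MemLp (⇑f) 2 (volume.restrict (Set.Ioo a r)) := by
      have := (Lp.memLp f).restrict (Set.Ioo a r)
      rwa [hrr] at this
    refine MemLp.of_le_mul (c := (r - a) * (r - a)) hfm ?_ ?_
    · exact ((Lp.stronglyMeasurable f).mul (((continuous_id.sub continuous_const).mul
        (continuous_const.sub continuous_id)).stronglyMeasurable)).aestronglyMeasurable
    · filter_upwards [ae_restrict_mem measurableSet_Ioo] with x hx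
      rw [hFdef]
      simp only [norm_mul, Real.norm_eq_abs]
      have h1 : |x - a| * |r - x| ≤ (r - a) * (r - a) := by
        have ha1 : |x - a| ≤ r - a := by
          rw [abs_of_nonneg (by linarith [hx.1] : (0:ℝ) ≤ x - a)]; linarith [hx.2]
        have ha2 : |r - x| ≤ r - a := by
          rw [abs_of_nonneg (by linarith [hx.2] : (0:ℝ) ≤ r - x)]; linarith [hx.1]
        exact mul_le_mul ha1 ha2 (abs_nonneg _) (by linarith)
      refine le_trans (mul_le_mul_of_nonneg_left h1 (abs_nonneg _)) (le_of_eq (mul_comm _ _))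
  have hint : ∀ q : Polynomial ℝ,
      ∫ x, F x * q.eval x ∂(volume.restrict (Set.Ioo a r)) = 0 := by
    intro q
    have h1 := horth q
    rw [MeasureTheory.L2.inner_def] at h1
    set W : ℝ → ℝ := fun x => (x - a) * (r - x) * q.eval x with hW
    have hWc : Continuous W :=
      ((continuous_id.sub continuous_const).mul
        (continuous_const.sub continuous_id)).mul q.continuous
    have hmem : MemLp (Set.indicator (Set.Ioo a r) W) 2 (volume.restrict J) := by
      refine memℒp_of_cont_supp ?_ (fun x hx => Set.indicator_of_notMem hx W)
      rw [indicator_Ioo_eq_Icc (by simp [hW]) (by simp [hW])]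
      exact continuous_indicator_Icc hr2 hWc (by simp [hW]) (by simp [hW])
    have h2 : ∫ x, Set.indicator (Set.Ioo a r) (fun y => W y * f y) x
        ∂(volume.restrict J) = 0 := by
      rw [← h1]
      apply integral_congr_ae
      filter_upwards [toL2_coeFn hmem] with x hx
      rw [RCLike.inner_apply, starRingEnd_apply, star_trivial, hx]
      by_cases hxI : x ∈ Set.Ioo a r
      · rw [Set.indicator_of_mem hxI, Set.indicator_of_mem hxI, mul_comm]
      · rw [Set.indicator_of_notMem hxI, Set.indicator_of_notMem hxI, mul_zero]
    rw [integral_indicator measurableSet_Ioo, hrr] at h2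
    rw [← h2]
    apply integral_congr_ae
    filter_upwards with x
    rw [hFdef, hW]
    ring
  have hFae := ae_zero_of_polys hr2 hFmem hint
  filter_upwards [hFae, ae_restrict_mem measurableSet_Ioo] with x hFx hx
  rw [hFdef] at hFx
  have hne : (x - a) * (r - x) ≠ 0 :=
    mul_ne_zero (by linarith [hx.1] : x - a ≠ 0) (by linarith [hx.2] : r - x ≠ 0)
  exact (mul_eq_zero.1 hFx).resolve_right hne

end Assemble

end KnotWavelet
open KnotWavelet in
theorem Vn_nested_and_dense
    (J ks : Set ℝ) (hJ : J.OrdConnected) (hks : IsKnotSeq J ks)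
    (κ : ℕ) (hκ : κ ∈ ({1, 2, 3} : Set ℕ))
    (p : ℕ → Polynomial ℝ) (hp : IsMonicUltraspherical p) :
    (∀ k : ℕ, Vn J ks p (3 * k + κ) ≤ Vn J ks p (3 * (k + 1) + κ)) ∧
    Dense (⋃ k : ℕ, (Vn J ks p (3 * k + κ) : Set (L2S J))) := by
  have hstep : ∀ k : ℕ, Vn J ks p (3 * k + κ) ≤ Vn J ks p (3 * (k + 1) + κ) := by
    intro k
    have h3 : 3 * (k + 1) + κ = (3 * k + κ) + 3 := by ring
    rw [h3]
    exact Vn_step hJ hks hp (3 * k + κ)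
  refine ⟨hstep, ?_⟩
  have hmono : Monotone fun k : ℕ => Vn J ks p (3 * k + κ) :=
    monotone_nat_of_le_succ hstep
  set Wsub : Submodule ℝ (L2S J) := ⨆ k : ℕ, Vn J ks p (3 * k + κ) with hW
  have hset : (Wsub : Set (L2S J)) = ⋃ k, (Vn J ks p (3 * k + κ) : Set (L2S J)) :=
    Submodule.coe_iSup_of_directed _ hmono.directed_le
  have horth : Wsubᗮ = ⊥ := by
    rw [Submodule.eq_bot_iff]
    intro f hf
    rw [Submodule.mem_orthogonal] at hf
    have hbubble : ∀ a ∈ ks, (∃ b ∈ ks, a < b) → ∀ q : Polynomial ℝ,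
        (inner ℝ (toL2 J (Set.indicator (Set.Ioo a (succR ks a))
          (fun x => (x - a) * (succR ks a - x) * q.eval x))) f : ℝ) = 0 := by
      intro a ha hex q
      apply hf
      have hmem := bubble_mem_splineSet hJ hks ha hex q
        (show q.natDegree + 2 ≤ 3 * (q.natDegree + 2) + κ by omega)
      have h2 : toL2 J (Set.indicator (Set.Ioo a (succR ks a))
          (fun x => (x - a) * (succR ks a - x) * q.eval x))
          ∈ Vn J ks p (3 * (q.natDegree + 2) + κ) :=
        Submodule.le_topologicalClosure _
          (Submodule.subset_span (Set.mem_union_left _ hmem))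
      exact (le_iSup (fun k : ℕ => Vn J ks p (3 * k + κ)) (q.natDegree + 2)) h2
    have hNm : MeasurableSet {x : ℝ | ¬ (f : ℝ → ℝ) x = 0} := by
      have := (Lp.stronglyMeasurable f).measurable (measurableSet_singleton (0:ℝ)).compl
      exact this
    have hae : ∀ᵐ x ∂(volume.restrict J), (f : ℝ → ℝ) x = 0 := by
      rw [MeasureTheory.ae_iff, Measure.restrict_apply hNm]
      set ks' : Set ℝ := {a | a ∈ ks ∧ ∃ b ∈ ks, a < b} with hks'
      have hcov : {x : ℝ | ¬ (f : ℝ → ℝ) x = 0} ∩ J ⊆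
          ks ∪ ⋃ a ∈ ks', ({x : ℝ | ¬ (f : ℝ → ℝ) x = 0} ∩ Set.Ioo a (succR ks a)) := by
        rintro x ⟨hxN, hxJ⟩
        by_cases hxk : x ∈ ks
        · exact Or.inl hxk
        · obtain ⟨a, ha, hex, h1, h2⟩ := knot_cover hJ hks hxJ hxk
          exact Or.inr (Set.mem_biUnion ⟨ha, hex⟩ ⟨hxN, h1, h2⟩)
      refine measure_mono_null hcov (measure_union_null ((ks_countable hJ hks).measure_zero _) ?_)
      rw [measure_biUnion_null_iff ((ks_countable hJ hks).mono
        (fun a (haks' : a ∈ ks') => haks'.1))]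
      intro a haks'
      obtain ⟨ha, hex⟩ := haks'
      have h3 := f_ae_zero_Ioo hJ hks ha hex f (hbubble a ha hex)
      rw [MeasureTheory.ae_iff, Measure.restrict_apply hNm] at h3
      exact h3
    exact Lp.eq_zero_iff_ae_eq_zero.mpr hae
  have htop : Wsub.topologicalClosure = ⊤ := Submodule.topologicalClosure_eq_top_iff.mpr horth
  rw [← hset, dense_iff_closure_eq]
  have hcoe := congrArg (fun s : Submodule ℝ (L2S J) => (s : Set (L2S J))) htop
  simp only [Submodule.topologicalClosure_coe, Submodule.top_coe] at hcoe
  exact hcoe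
end
end

section
/- For every a ∈ 𝐚, the spaces V̆⁰_a, A_a⁺, and A_{a₊}⁻ are mutually orthogonal subspaces of V̆¹_a, and P_{V̆¹_a}V⁰ = V̆⁰_a ⊕ A_a⁺ ⊕ A_{a₊}⁻. -/
open MeasureTheory Set Filter

noncomputable section

namespace KnotWavelet

variable (J ks : Set ℝ)

open Classical in
/-- Multiplication by the characteristic function of `I`, as a linear map. -/
def indLM (I : Set ℝ) : L2S J →ₗ[ℝ] L2S J where
  toFun := indL2 J I
  map_add' f g := by
    unfold indL2
    split_ifs with h
    · have hf := (Lp.memLp f).indicator h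
      have hg := (Lp.memLp g).indicator h
      calc ((Lp.memLp (f + g)).indicator h).toLp (I.indicator ⇑(f + g))
          = (hf.add hg).toLp (I.indicator ⇑f + I.indicator ⇑g) := by
            refine MemLp.toLp_congr _ _ ?_
            filter_upwards [Lp.coeFn_add f g] with x hx
            by_cases hxI : x ∈ I
            · rw [Pi.add_apply, Set.indicator_of_mem hxI, Set.indicator_of_mem hxI,
                Set.indicator_of_mem hxI]
              exact hx
            · rw [Pi.add_apply, Set.indicator_of_notMem hxI, Set.indicator_of_notMem hxI,
                Set.indicator_of_notMem hxI, add_zero]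
        _ = hf.toLp (I.indicator ⇑f) + hg.toLp (I.indicator ⇑g) := MemLp.toLp_add hf hg
    · simp
  map_smul' c f := by
    unfold indL2
    split_ifs with h
    · have hf := (Lp.memLp f).indicator h
      calc ((Lp.memLp (c • f)).indicator h).toLp (I.indicator ⇑(c • f))
          = (hf.const_smul c).toLp (c • I.indicator ⇑f) := by
            refine MemLp.toLp_congr _ _ ?_
            filter_upwards [Lp.coeFn_smul c f] with x hx
            by_cases hxI : x ∈ I
            · rw [Pi.smul_apply, Set.indicator_of_mem hxI, Set.indicator_of_mem hxI]
              exact hx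
            · rw [Pi.smul_apply, Set.indicator_of_notMem hxI, Set.indicator_of_notMem hxI,
                smul_zero]
        _ = c • hf.toLp (I.indicator ⇑f) := MemLp.toLp_const_smul c hf
    · simp

/-- The image `χ_I · U` of a subspace under multiplication by the characteristic function of
`I`. -/
def chiMul (I : Set ℝ) (U : Submodule ℝ (L2S J)) : Submodule ℝ (L2S J) :=
  U.map (indLM J I)

/-- `V_a`, the subspace of members of `V` supported in `[a₋, a₊]`. -/
def Vmid (V : Submodule ℝ (L2S J)) (a : ℝ) : Submodule ℝ (L2S J) :=
  suppSub J V (IccPS ks a)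

/-- `V̆_a`, the subspace of members of `V` supported in `[a, a₊]`. -/
def Vbreve (V : Submodule ℝ (L2S J)) (a : ℝ) : Submodule ℝ (L2S J) :=
  suppSub J V (IccS ks a)

open Classical in
/-- `V̆_{a₋}` (the zero subspace if `a` has no predecessor in `ks`). -/
def VbrevePred (V : Submodule ℝ (L2S J)) (a : ℝ) : Submodule ℝ (L2S J) :=
  if {b ∈ ks | b < a}.Nonempty then suppSub J V (IccP ks a) else ⊥

/-- `V̄_a := (I − P_{V̆_{a₋} ⊕ V̆_a}) V_a`. -/
def Vbar (V : Submodule ℝ (L2S J)) (a : ℝ) : Submodule ℝ (L2S J) :=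
  oneSubProjSub (VbrevePred J ks V a ⊔ Vbreve J ks V a) (Vmid J ks V a)

/-- `A_a⁺ := P_{V̆¹_a} V̄⁰_a`. -/
def Aplus (V₀ V₁ : Submodule ℝ (L2S J)) (a : ℝ) : Submodule ℝ (L2S J) :=
  projSub (Vbreve J ks V₁ a) (Vbar J ks V₀ a)

/-- `A_a⁻ := P_{V̆¹_{a₋}} V̄⁰_a`. -/
def Aminus (V₀ V₁ : Submodule ℝ (L2S J)) (a : ℝ) : Submodule ℝ (L2S J) :=
  projSub (VbrevePred J ks V₁ a) (Vbar J ks V₀ a)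

/-- The wavelet space `W := V¹ ⊖ V⁰`, the orthogonal complement of `V⁰` in `V¹`. -/
def Wsp (V₀ V₁ : Submodule ℝ (L2S J)) : Submodule ℝ (L2S J) :=
  V₁ ⊓ V₀ᗮ

/-- `W̄_a := W_a ⊖ (W̆_{a₋} ⊕ W̆_a)`. -/
def Wbar (V₀ V₁ : Submodule ℝ (L2S J)) (a : ℝ) : Submodule ℝ (L2S J) :=
  Vmid J ks (Wsp J V₀ V₁) a ⊓
    (VbrevePred J ks (Wsp J V₀ V₁) a ⊔ Vbreve J ks (Wsp J V₀ V₁) a)ᗮ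

/-- `Y_a := V̄⁰_a ∩ V̄¹_a`. -/
def Ysp (V₀ V₁ : Submodule ℝ (L2S J)) (a : ℝ) : Submodule ℝ (L2S J) :=
  Vbar J ks V₀ a ⊓ Vbar J ks V₁ a

/-- `Y_a⁺ := (χ_{[a,a₊]}·V̄⁰_a) ∩ (χ_{[a,a₊]}·V̄¹_a)`. -/
def Yplus (V₀ V₁ : Submodule ℝ (L2S J)) (a : ℝ) : Submodule ℝ (L2S J) :=
  chiMul J (IccS ks a) (Vbar J ks V₀ a) ⊓ chiMul J (IccS ks a) (Vbar J ks V₁ a)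

/-- `Y_a⁻ := (χ_{[a₋,a]}·V̄⁰_a) ∩ (χ_{[a₋,a]}·V̄¹_a)`. -/
def Yminus (V₀ V₁ : Submodule ℝ (L2S J)) (a : ℝ) : Submodule ℝ (L2S J) :=
  chiMul J (IccP ks a) (Vbar J ks V₀ a) ⊓ chiMul J (IccP ks a) (Vbar J ks V₁ a)

/-- `X_a⁺ := (χ_{[a,a₊]}·V̄⁰_a) ⊖ Y_a⁺`. -/
def Xplus (V₀ V₁ : Submodule ℝ (L2S J)) (a : ℝ) : Submodule ℝ (L2S J) :=
  chiMul J (IccS ks a) (Vbar J ks V₀ a) ⊓ (Yplus J ks V₀ V₁ a)ᗮ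

/-- `X_a⁻ := (χ_{[a₋,a]}·V̄⁰_a) ⊖ Y_a⁻`. -/
def Xminus (V₀ V₁ : Submodule ℝ (L2S J)) (a : ℝ) : Submodule ℝ (L2S J) :=
  chiMul J (IccP ks a) (Vbar J ks V₀ a) ⊓ (Yminus J ks V₀ V₁ a)ᗮ

/-- `T_a := (I − P_{V̄¹_a}) V̄⁰_a`. -/
def Tsp (V₀ V₁ : Submodule ℝ (L2S J)) (a : ℝ) : Submodule ℝ (L2S J) :=
  oneSubProjSub (Vbar J ks V₁ a) (Vbar J ks V₀ a)

/-- `T_a⁻ := {f ∈ T_a : supp f ⊆ [a₋,a]}`. -/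
def Tminus (V₀ V₁ : Submodule ℝ (L2S J)) (a : ℝ) : Submodule ℝ (L2S J) :=
  suppSub J (Tsp J ks V₀ V₁ a) (IccP ks a)

/-- `T_a⁺ := {f ∈ T_a : supp f ⊆ [a,a₊]}`. -/
def Tplus (V₀ V₁ : Submodule ℝ (L2S J)) (a : ℝ) : Submodule ℝ (L2S J) :=
  suppSub J (Tsp J ks V₀ V₁ a) (IccS ks a)

/-- `U_a := T_a ⊖ (T_a⁻ ⊕ T_a⁺)`. -/
def Usp (V₀ V₁ : Submodule ℝ (L2S J)) (a : ℝ) : Submodule ℝ (L2S J) :=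
  Tsp J ks V₀ V₁ a ⊓ (Tminus J ks V₀ V₁ a ⊔ Tplus J ks V₀ V₁ a)ᗮ

/-- `S_a := (χ_{[a,a₊]} − χ_{[a₋,a]})·U_a`. -/
def Ssp (V₀ V₁ : Submodule ℝ (L2S J)) (a : ℝ) : Submodule ℝ (L2S J) :=
  (Usp J ks V₀ V₁ a).map (indLM J (IccS ks a) - indLM J (IccP ks a))

/-- `Ŵ_a := (I − P_{V̄⁰_a}) V̄¹_a`. -/
def What (V₀ V₁ : Submodule ℝ (L2S J)) (a : ℝ) : Submodule ℝ (L2S J) :=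
  oneSubProjSub (Vbar J ks V₀ a) (Vbar J ks V₁ a)

/-- `W̃_a := W̄_a ⊖ Ŵ_a`. -/
def Wtilde (V₀ V₁ : Submodule ℝ (L2S J)) (a : ℝ) : Submodule ℝ (L2S J) :=
  Wbar J ks V₀ V₁ a ⊓ (What J ks V₀ V₁ a)ᗮ

end KnotWavelet

namespace KnotWavelet

section Generic

variable {J ks : Set ℝ}

/-! ### Support basics -/

lemma SuppIn.mono {f : L2S J} {I I' : Set ℝ} (h : SuppIn J f I) (hII' : I ⊆ I') :
    SuppIn J f I' := by
  filter_upwards [h] with x hx hxI'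
  exact hx fun hxI => hxI' (hII' hxI)

lemma SuppIn.inter {f : L2S J} {I I' : Set ℝ} (h : SuppIn J f I) (h' : SuppIn J f I') :
    SuppIn J f (I ∩ I') := by
  filter_upwards [h, h'] with x hx hx' hxII'
  by_cases hI : x ∈ I
  · exact hx' fun hI' => hxII' ⟨hI, hI'⟩
  · exact hx hI

lemma span_suppIn {S : Set (L2S J)} {I : Set ℝ} (hS : ∀ g ∈ S, SuppIn J g I) {x : L2S J}
    (hx : x ∈ Submodule.span ℝ S) : SuppIn J x I := by
  have hle : Submodule.span ℝ S ≤ suppSub J ⊤ I :=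
    Submodule.span_le.2 fun g hg => ⟨trivial, hS g hg⟩
  exact (hle hx).2

lemma restrict_null_singleton {S : Set ℝ} {c : ℝ} (h : S ⊆ {c}) :
    volume.restrict J S = 0 :=
  le_antisymm (((measure_mono h).trans (Measure.restrict_apply_le _ _)).trans_eq (by simp))
    zero_le

lemma restrict_null_empty {S : Set ℝ} (h : S ⊆ (∅ : Set ℝ)) :
    volume.restrict J S = 0 :=
  le_antisymm ((measure_mono h).trans_eq (by simp)) zero_le

/-! ### Inner products and supports -/

lemma inner_eq_zero_of_suppIn {f g : L2S J} {S T : Set ℝ} (hf : SuppIn J f S)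
    (hg : SuppIn J g T) (hST : volume.restrict J (S ∩ T) = 0) :
    (inner ℝ f g : ℝ) = 0 := by
  rw [MeasureTheory.L2.inner_def]
  refine integral_eq_zero_of_ae ?_
  have h3 : ∀ᵐ x ∂volume.restrict J, x ∉ S ∩ T := measure_eq_zero_iff_ae_notMem.mp hST
  filter_upwards [hf, hg, h3] with x h1 h2 h4
  by_cases hxS : x ∈ S
  · have hxT : x ∉ T := fun hxT => h4 ⟨hxS, hxT⟩
    simp [h2 hxT]
  · simp [h1 hxS]

lemma inner_eq_zero_of_vanish {f φ : L2S J} {Iv : Set ℝ} {c d : ℝ} (hf : SuppIn J f Iv)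
    (hsub : ∀ᵐ x ∂volume.restrict J, x ∈ Iv → x ∈ Icc c d)
    (hvan : ∀ᵐ x ∂volume.restrict J, x ∈ Icc c d → φ x = 0) :
    (inner ℝ f φ : ℝ) = 0 := by
  rw [MeasureTheory.L2.inner_def]
  refine integral_eq_zero_of_ae ?_
  filter_upwards [hf, hsub, hvan] with x h1 h2 h3
  by_cases hxI : x ∈ Iv
  · simp [h3 (h2 hxI)]
  · simp [h1 hxI]

/-! ### Indicator basics -/

lemma indL2_coeFn {I : Set ℝ} (hI : MeasurableSet I) (f : L2S J) :
    indL2 J I f =ᵐ[volume.restrict J] I.indicator f := by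
  unfold indL2
  rw [dif_pos hI]
  exact MemLp.coeFn_toLp _

lemma indL2_eq_zero {I : Set ℝ} (hI : MeasurableSet I) {f : L2S J}
    (h : ∀ᵐ x ∂volume.restrict J, x ∈ I → f x = 0) : indL2 J I f = 0 := by
  unfold indL2
  rw [dif_pos hI]
  have hae : I.indicator ⇑f =ᵐ[volume.restrict J] (0 : ℝ → ℝ) := by
    filter_upwards [h] with x hx
    by_cases hxI : x ∈ I
    · simp [Set.indicator_of_mem hxI, hx hxI]
    · simp [Set.indicator_of_notMem hxI]
  rw [show ((Lp.memLp f).indicator hI).toLp (I.indicator ⇑f) = MemLp.zero.toLp (0 : ℝ → ℝ) from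
    (MemLp.toLp_eq_toLp_iff _ _).2 hae, MemLp.toLp_zero]

lemma suppIn_iff_indL2_compl {I : Set ℝ} (hI : MeasurableSet I) (f : L2S J) :
    SuppIn J f I ↔ indL2 J Iᶜ f = 0 := by
  constructor
  · intro h
    exact indL2_eq_zero hI.compl (by filter_upwards [h] with x hx hxc; exact hx hxc)
  · intro h
    have h1 : Iᶜ.indicator ⇑f =ᵐ[volume.restrict J] ⇑(0 : L2S J) :=
      (indL2_coeFn hI.compl f).symm.trans (h ▸ EventuallyEq.rfl)
    filter_upwards [h1, Lp.coeFn_zero ℝ 2 (volume.restrict J)] with x hx h0 hxI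
    have : Iᶜ.indicator ⇑f x = 0 := by rw [hx, h0]; rfl
    rwa [Set.indicator_of_mem (by simpa using hxI)] at this

lemma norm_indL2_le (I : Set ℝ) (f : L2S J) : ‖indL2 J I f‖ ≤ ‖f‖ := by
  unfold indL2
  split_ifs with h
  · rw [MeasureTheory.Lp.norm_toLp, MeasureTheory.Lp.norm_def]
    exact ENNReal.toReal_mono (Lp.eLpNorm_ne_top f) (eLpNorm_indicator_le _)
  · simp

/-- The indicator multiplication as a continuous linear map. -/
def indCLM (J : Set ℝ) (I : Set ℝ) : L2S J →L[ℝ] L2S J :=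
  LinearMap.mkContinuous (indLM J I) 1 fun f => by
    simpa [indLM] using norm_indL2_le (J := J) I f

set_option synthInstance.maxHeartbeats 1000000 in
lemma isClosed_setOf_suppIn {I : Set ℝ} (hI : MeasurableSet I) :
    IsClosed {f : L2S J | SuppIn J f I} := by
  have : {f : L2S J | SuppIn J f I} = (⇑(indCLM J Iᶜ)) ⁻¹' {0} := by
    ext f
    simpa [indCLM, indLM] using suppIn_iff_indL2_compl hI f
  rw [this]
  exact isClosed_singleton.preimage (indCLM J Iᶜ).continuous

lemma isClosed_suppSub {V : Submodule ℝ (L2S J)} (hV : IsClosed (V : Set (L2S J)))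
    {I : Set ℝ} (hI : MeasurableSet I) :
    IsClosed ((suppSub J V I : Submodule ℝ (L2S J)) : Set (L2S J)) := by
  have : ((suppSub J V I : Submodule ℝ (L2S J)) : Set (L2S J)) =
      (V : Set (L2S J)) ∩ {f | SuppIn J f I} := rfl
  rw [this]
  exact hV.inter (isClosed_setOf_suppIn hI)

/-! ### Measurability of the knot intervals -/

lemma measurableSet_IccS (ks : Set ℝ) (a : ℝ) : MeasurableSet (IccS ks a) :=
  Set.OrdConnected.measurableSet
    ⟨fun _ hx _ hy _ hz => ⟨hx.1.trans hz.1, (EReal.coe_le_coe_iff.2 hz.2).trans hy.2⟩⟩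

lemma measurableSet_IccPS (ks : Set ℝ) (a : ℝ) : MeasurableSet (IccPS ks a) :=
  Set.OrdConnected.measurableSet
    ⟨fun _ hx _ hy _ hz => ⟨hx.1.trans (EReal.coe_le_coe_iff.2 hz.1),
      (EReal.coe_le_coe_iff.2 hz.2).trans hy.2⟩⟩

lemma measurableSet_IccP (ks : Set ℝ) (a : ℝ) : MeasurableSet (IccP ks a) :=
  Set.OrdConnected.measurableSet
    ⟨fun _ hx _ hy _ hz => ⟨hx.1.trans (EReal.coe_le_coe_iff.2 hz.1), hz.2.trans hy.2⟩⟩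

end Generic

section Proj

variable {H : Type*} [NormedAddCommGroup H] [InnerProductSpace ℝ H] [CompleteSpace H]

open Topology

lemma projL_mem (K : Submodule ℝ H) (f : H) : projL K f ∈ K.topologicalClosure :=
  SetLike.coe_mem _

lemma projL_eq_self {K : Submodule ℝ H} {f : H} (h : f ∈ K.topologicalClosure) :
    projL K f = f :=
  Submodule.starProjection_eq_self_iff.2 h

lemma projL_eq_self' {K : Submodule ℝ H} {f : H} (h : f ∈ K) : projL K f = f :=
  projL_eq_self (K.le_topologicalClosure h)

lemma inner_projL_left (K : Submodule ℝ H) (u v : H) :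
    (inner ℝ (projL K u) v : ℝ) = inner ℝ u (projL K v) :=
  Submodule.inner_starProjection_left_eq_right _ u v

lemma sub_projL_mem_orthogonal (K : Submodule ℝ H) (u : H) :
    u - projL K u ∈ K.topologicalClosureᗮ :=
  Submodule.sub_starProjection_mem_orthogonal (K := K.topologicalClosure) u

lemma inner_projL_sub_right (K : Submodule ℝ H) (u : H) {g : H} (hg : g ∈ K) :
    (inner ℝ g (u - projL K u) : ℝ) = 0 :=
  (sub_projL_mem_orthogonal K u) g (K.le_topologicalClosure hg)

lemma mem_orthogonal_of_inner_right {K : Submodule ℝ H} {f : H}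
    (h : ∀ g ∈ K, (inner ℝ f g : ℝ) = 0) : f ∈ K.topologicalClosureᗮ := by
  intro g hg
  have hcl : (K.topologicalClosure : Set H) ⊆ {w : H | (inner ℝ f w : ℝ) = 0} := by
    rw [Submodule.topologicalClosure_coe]
    refine closure_minimal (fun w hw => h w hw) ?_
    exact isClosed_eq (Continuous.inner continuous_const continuous_id) continuous_const
  have : (inner ℝ f g : ℝ) = 0 := hcl hg
  rw [real_inner_comm] at this
  exact this

lemma projL_eq_zero {K : Submodule ℝ H} {f : H} (h : ∀ g ∈ K, (inner ℝ f g : ℝ) = 0) :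
    projL K f = 0 := by
  have : K.topologicalClosure.orthogonalProjectionOnto f = 0 :=
    Submodule.orthogonalProjectionOnto_apply_of_mem_orthogonal
      (mem_orthogonal_of_inner_right h)
  simp only [projL, LinearMap.coe_comp, Function.comp_apply,
    ContinuousLinearMap.coe_coe, this]
  rfl

lemma continuous_projL (K : Submodule ℝ H) : Continuous (projL K) :=
  continuous_subtype_val.comp K.topologicalClosure.orthogonalProjectionOnto.continuous

/-! ### Closedness of sups -/

lemma isClosed_sup_orth {C F : Submodule ℝ H} (hC : IsClosed (C : Set H))
    (hF : IsClosed (F : Set H)) (hCF : F ≤ Cᗮ) : IsClosed ((C ⊔ F : Submodule ℝ H) : Set H) := by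
  have hFtc : F.topologicalClosure = F := hF.submodule_topologicalClosure_eq
  refine isClosed_of_closure_subset ?_
  intro x hx
  obtain ⟨u, hu, hux⟩ := mem_closure_iff_seq_limit.1 hx
  have hdec : ∀ n, projL F (u n) ∈ F ∧ u n - projL F (u n) ∈ C := by
    intro n
    obtain ⟨c, hc, f, hf, hcf⟩ := Submodule.mem_sup.1 (hu n)
    have h1 : projL F c = 0 := projL_eq_zero fun g hg =>
      real_inner_comm c g ▸ (hCF hg) c hc
    have h2 : projL F f = f := projL_eq_self' hf
    have h3 : projL F (u n) = f := by
      rw [← hcf, map_add, h1, h2, zero_add]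
    constructor
    · rw [h3]; exact hf
    · rw [h3, ← hcf]; simpa using hc
  have h4 : Filter.Tendsto (fun n => projL F (u n)) Filter.atTop (𝓝 (projL F x)) :=
    ((continuous_projL F).tendsto x).comp hux
  have h5 : projL F x ∈ F := by have := projL_mem F x; rwa [hFtc] at this
  have h6 : Filter.Tendsto (fun n => u n - projL F (u n)) Filter.atTop
      (𝓝 (x - projL F x)) := hux.sub h4
  have h7 : x - projL F x ∈ C := hC.mem_of_tendsto h6
    (Filter.Eventually.of_forall fun n => (hdec n).2)
  have : x = (x - projL F x) + projL F x := by abel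
  rw [this]
  exact Submodule.add_mem _ (Submodule.mem_sup_left h7) (Submodule.mem_sup_right h5)

lemma isClosed_sup_fd {C F : Submodule ℝ H} (hC : IsClosed (C : Set H))
    [FiniteDimensional ℝ F] : IsClosed ((C ⊔ F : Submodule ℝ H) : Set H) := by
  have hCtc : C.topologicalClosure = C := hC.submodule_topologicalClosure_eq
  set F' : Submodule ℝ H := F.map (LinearMap.id - projL C) with hF'
  have hfd : FiniteDimensional ℝ F' := Module.Finite.map F (LinearMap.id - projL C)
  have hF'C : F' ≤ Cᗮ := by
    rintro _ ⟨f, hf, rfl⟩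
    have := sub_projL_mem_orthogonal C f
    rw [hCtc] at this
    simpa [LinearMap.sub_apply] using this
  have hsup : C ⊔ F = C ⊔ F' := by
    apply le_antisymm
    · refine sup_le le_sup_left ?_
      intro f hf
      have h1 : f - projL C f ∈ F' := ⟨f, hf, by simp [LinearMap.sub_apply]⟩
      have h2 : projL C f ∈ C := by have := projL_mem C f; rwa [hCtc] at this
      have : f = projL C f + (f - projL C f) := by abel
      rw [this]
      exact Submodule.add_mem _ (Submodule.mem_sup_left h2) (Submodule.mem_sup_right h1)
    · refine sup_le le_sup_left ?_
      rintro _ ⟨f, hf, rfl⟩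
      have h2 : projL C f ∈ C := by have := projL_mem C f; rwa [hCtc] at this
      simp only [LinearMap.sub_apply, LinearMap.id_apply]
      exact Submodule.sub_mem _ (Submodule.mem_sup_right hf) (Submodule.mem_sup_left h2)
  rw [hsup]
  exact isClosed_sup_orth hC (Submodule.closed_of_finiteDimensional F') hF'C

end Proj

section Knots

variable {J ks : Set ℝ} {a a' b c : ℝ}

lemma le_succE (ks : Set ℝ) (a : ℝ) : (a : EReal) ≤ succE ks a :=
  le_sInf (by rintro _ ⟨x, ⟨-, hx⟩, rfl⟩; exact EReal.coe_le_coe_iff.2 hx.le)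

lemma predE_le (ks : Set ℝ) (a : ℝ) : predE ks a ≤ (a : EReal) :=
  sSup_le (by rintro _ ⟨x, ⟨-, hx⟩, rfl⟩; exact EReal.coe_le_coe_iff.2 hx.le)

lemma succE_le_s8 (hc : c ∈ ks) (hbc : b < c) : succE ks b ≤ (c : EReal) :=
  sInf_le ⟨c, ⟨hc, hbc⟩, rfl⟩

lemma le_predE (hc : c ∈ ks) (hcb : c < b) : (c : EReal) ≤ predE ks b :=
  le_sSup ⟨c, ⟨hc, hcb⟩, rfl⟩

lemma IsSucc.succE_eq (hs : IsSucc ks a a') : succE ks a = (a' : EReal) :=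
  le_antisymm (succE_le_s8 hs.2.1 hs.2.2.1)
    (le_sInf (by
      rintro _ ⟨x, ⟨hx, hax⟩, rfl⟩
      exact EReal.coe_le_coe_iff.2 ((hs.2.2.2 x hx).resolve_left (not_le.2 hax))))

lemma IsSucc.predE_eq (hs : IsSucc ks a a') : predE ks a' = (a : EReal) :=
  le_antisymm
    (sSup_le (by
      rintro _ ⟨x, ⟨hx, hxa'⟩, rfl⟩
      exact EReal.coe_le_coe_iff.2 ((hs.2.2.2 x hx).resolve_right (not_le.2 hxa'))))
    (le_sSup ⟨a, ⟨hs.1, hs.2.2.1⟩, rfl⟩)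

lemma IsSucc.IccS_eq (hs : IsSucc ks a a') : IccS ks a = Icc a a' := by
  ext x
  simp only [IccS, hs.succE_eq, EReal.coe_le_coe_iff, Set.mem_setOf_eq, Set.mem_Icc]

lemma IsSucc.IccP_succ_eq (hs : IsSucc ks a a') : IccP ks a' = Icc a a' := by
  ext x
  simp only [IccP, hs.predE_eq, EReal.coe_le_coe_iff, Set.mem_setOf_eq, Set.mem_Icc]

lemma IsSucc.succR_eq (hs : IsSucc ks a a') : succR ks a = a' :=
  IsLeast.csInf_eq ⟨⟨hs.2.1, hs.2.2.1⟩,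
    fun b hb => (hs.2.2.2 b hb.1).resolve_left (not_le.2 hb.2)⟩

lemma IsSucc.vbrevePred_eq (hs : IsSucc ks a a') (V : Submodule ℝ (L2S J)) :
    VbrevePred J ks V a' = Vbreve J ks V a := by
  unfold VbrevePred Vbreve
  rw [if_pos ⟨a, hs.1, hs.2.2.1⟩, show IccP ks a' = IccS ks a from
    hs.IccP_succ_eq.trans hs.IccS_eq.symm]

lemma exists_isSucc_pred (hJ : J.OrdConnected) (hks : IsKnotSeq J ks) (ha : a ∈ ks)
    (hne : {b ∈ ks | b < a}.Nonempty) : ∃ p, IsSucc ks p a := by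
  obtain ⟨b₀, hb₀ks, hb₀a⟩ := hne
  set S := {b ∈ ks | b < a} with hS
  have hne' : S.Nonempty := ⟨b₀, hb₀ks, hb₀a⟩
  have hbdd : BddAbove S := ⟨a, fun x hx => hx.2.le⟩
  set p := sSup S with hp
  have hpa : p ≤ a := csSup_le hne' fun x hx => hx.2.le
  have hb₀p : b₀ ≤ p := le_csSup hbdd ⟨hb₀ks, hb₀a⟩
  have hpJ : p ∈ J := hJ.out (hks.subset hb₀ks) (hks.subset ha) ⟨hb₀p, hpa⟩
  have hpS : p ∈ S := by
    by_contra hpS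
    refine hks.noCluster p hpJ ((accPt_iff_nhds (x := p) (C := ks)).2 fun U hU => ?_)
    obtain ⟨ε, hε, hball⟩ := Metric.mem_nhds_iff.1 hU
    obtain ⟨s, hsS, hs⟩ := exists_lt_of_lt_csSup hne' (show p - ε < p by linarith)
    have hsp : s ≤ p := le_csSup hbdd hsS
    refine ⟨s, ⟨hball ?_, hsS.1⟩, fun h => hpS (h ▸ hsS)⟩
    rw [Metric.mem_ball, Real.dist_eq, abs_of_nonpos (by linarith)]
    linarith
  refine ⟨p, hpS.1, ha, hpS.2, fun b hb => ?_⟩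
  rcases lt_or_ge b a with h | h
  · exact Or.inl (le_csSup hbdd ⟨hb, h⟩)
  · exact Or.inr h

lemma exists_isSucc_succ (hJ : J.OrdConnected) (hks : IsKnotSeq J ks) (ha : a ∈ ks)
    (hne : {b ∈ ks | a < b}.Nonempty) : ∃ q, IsSucc ks a q := by
  obtain ⟨b₀, hb₀ks, hb₀a⟩ := hne
  set S := {b ∈ ks | a < b} with hS
  have hne' : S.Nonempty := ⟨b₀, hb₀ks, hb₀a⟩
  have hbdd : BddBelow S := ⟨a, fun x hx => hx.2.le⟩
  set q := sInf S with hq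
  have haq : a ≤ q := le_csInf hne' fun x hx => hx.2.le
  have hqb₀ : q ≤ b₀ := csInf_le hbdd ⟨hb₀ks, hb₀a⟩
  have hqJ : q ∈ J := hJ.out (hks.subset ha) (hks.subset hb₀ks) ⟨haq, hqb₀⟩
  have hqS : q ∈ S := by
    by_contra hqS
    refine hks.noCluster q hqJ ((accPt_iff_nhds (x := q) (C := ks)).2 fun U hU => ?_)
    obtain ⟨ε, hε, hball⟩ := Metric.mem_nhds_iff.1 hU
    obtain ⟨s, hsS, hs⟩ := exists_lt_of_csInf_lt hne' (show q < q + ε by linarith)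
    have hqs : q ≤ s := csInf_le hbdd hsS
    refine ⟨s, ⟨hball ?_, hsS.1⟩, fun h => hqS (h ▸ hsS)⟩
    rw [Metric.mem_ball, Real.dist_eq, abs_of_nonneg (by linarith)]
    linarith
  refine ⟨q, ha, hqS.1, hqS.2, fun b hb => ?_⟩
  rcases le_or_gt b a with h | h
  · exact Or.inl h
  · exact Or.inr (csInf_le hbdd ⟨hb, h⟩)

lemma mem_Ici_of_pred_empty (hks : IsKnotSeq J ks) (hne : ¬{b ∈ ks | b < a}.Nonempty) :
    ∀ x ∈ J, a ≤ x := by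
  intro x hx
  have h1 : (a : EReal) ≤ sInf ((fun x : ℝ => (x : EReal)) '' ks) := by
    refine le_sInf ?_
    rintro _ ⟨y, hy, rfl⟩
    rcases le_or_gt a y with h | h
    · exact EReal.coe_le_coe_iff.2 h
    · exact absurd ⟨y, hy, h⟩ hne
  have h2 : sInf ((fun x : ℝ => (x : EReal)) '' J) ≤ (x : EReal) := sInf_le ⟨x, hx, rfl⟩
  exact EReal.coe_le_coe_iff.1 ((h1.trans_eq hks.inf_eq).trans h2)

lemma mem_Iic_of_succ_empty (hks : IsKnotSeq J ks) (hne : ¬{b ∈ ks | a < b}.Nonempty) :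
    ∀ x ∈ J, x ≤ a := by
  intro x hx
  have h1 : sSup ((fun x : ℝ => (x : EReal)) '' ks) ≤ (a : EReal) := by
    refine sSup_le ?_
    rintro _ ⟨y, hy, rfl⟩
    rcases le_or_gt y a with h | h
    · exact EReal.coe_le_coe_iff.2 h
    · exact absurd ⟨y, hy, h⟩ hne
  have h2 : (x : EReal) ≤ sSup ((fun x : ℝ => (x : EReal)) '' J) := le_sSup ⟨x, hx, rfl⟩
  exact EReal.coe_le_coe_iff.1 (h2.trans (hks.sup_eq ▸ h1))

end Knots

section SpanOrth

variable {H : Type*} [NormedAddCommGroup H] [InnerProductSpace ℝ H]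

lemma inner_span_right {T : Set H} {x h : H} (hx : ∀ y ∈ T, (inner ℝ x y : ℝ) = 0)
    (hh : h ∈ Submodule.span ℝ T) : (inner ℝ x h : ℝ) = 0 := by
  induction hh using Submodule.span_induction with
  | mem y hy => exact hx y hy
  | zero => exact inner_zero_right x
  | add y z _ _ h1 h2 => rw [inner_add_right, h1, h2, add_zero]
  | smul r y _ h1 => rw [real_inner_smul_right, h1, mul_zero]

lemma inner_span_left {S : Set H} {g x : H} (hx : ∀ y ∈ S, (inner ℝ y x : ℝ) = 0)
    (hg : g ∈ Submodule.span ℝ S) : (inner ℝ g x : ℝ) = 0 := by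
  rw [real_inner_comm]
  exact inner_span_right (fun y hy => by rw [real_inner_comm]; exact hx y hy) hg

lemma inner_span_span {Φ S T : Set H} (hΦ : Φ.Pairwise fun f g => (inner ℝ f g : ℝ) = 0)
    (hS : S ⊆ Φ) (hT : T ⊆ Φ) (hST : Disjoint S T) {g h : H}
    (hg : g ∈ Submodule.span ℝ S) (hh : h ∈ Submodule.span ℝ T) : (inner ℝ g h : ℝ) = 0 :=
  inner_span_left (fun y hy => inner_span_right
    (fun z hz => hΦ (hS hy) (hT hz) (hST.ne_of_mem hy hz)) hh) hg

lemma mem_span_diff {Φ F T : Set H} (hΦ : Φ.Pairwise fun f g => (inner ℝ f g : ℝ) = 0)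
    (hF : F ⊆ Φ) (hT : T ⊆ Φ) {f : H} (hf : f ∈ Submodule.span ℝ F)
    (horth : ∀ φ ∈ T, (inner ℝ f φ : ℝ) = 0) : f ∈ Submodule.span ℝ (F \ T) := by
  have hsplit : f ∈ Submodule.span ℝ (F \ T) ⊔ Submodule.span ℝ (F ∩ T) := by
    rw [← Submodule.span_union]
    refine Submodule.span_mono (fun x hx => ?_) hf
    by_cases hxT : x ∈ T
    · exact Or.inr ⟨hx, hxT⟩
    · exact Or.inl ⟨hx, hxT⟩
  obtain ⟨g, hg, h, hh, hghf⟩ := Submodule.mem_sup.1 hsplit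
  have hdisj : Disjoint (F \ T) (F ∩ T) :=
    Set.disjoint_left.2 fun x hx hx2 => hx.2 hx2.2
  have h1 : (inner ℝ f h : ℝ) = (inner ℝ h h : ℝ) := by
    rw [← hghf, inner_add_left,
      inner_span_span hΦ (diff_subset.trans hF) (inter_subset_left.trans hF) hdisj hg hh,
      zero_add]
  have h2 : (inner ℝ f h : ℝ) = 0 := inner_span_right (fun y hy => horth y hy.2) hh
  have h3 : h = 0 := inner_self_eq_zero.1 (by rw [← h1]; exact h2)
  rw [← hghf, h3, add_zero]
  exact hg

lemma mem_span_of_orthogonal [CompleteSpace H] {Φ F : Set H}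
    (hΦ : Φ.Pairwise fun f g => (inner ℝ f g : ℝ) = 0) (hF : F ⊆ Φ) (hFfin : F.Finite)
    {f : H} (hf : f ∈ (Submodule.span ℝ Φ).topologicalClosure)
    (horth : ∀ φ ∈ Φ, φ ∉ F → (inner ℝ f φ : ℝ) = 0) : f ∈ Submodule.span ℝ F := by
  set S := Submodule.span ℝ F with hSdef
  haveI : FiniteDimensional ℝ S := FiniteDimensional.span_of_finite ℝ hFfin
  have hScl : IsClosed (S : Set H) := Submodule.closed_of_finiteDimensional S
  set u := projL S f with hu
  have huS : u ∈ S := by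
    have := projL_mem S f
    rwa [hScl.submodule_topologicalClosure_eq] at this
  have hv : ∀ φ ∈ Φ, (inner ℝ (f - u) φ : ℝ) = 0 := by
    intro φ hφ
    by_cases hφF : φ ∈ F
    · rw [real_inner_comm]
      exact inner_projL_sub_right S f (Submodule.subset_span hφF)
    · have huφ : (inner ℝ u φ : ℝ) = 0 :=
        inner_span_left (fun y hy => hΦ (hF hy) hφ (fun hyx => hφF (hyx ▸ hy))) huS
      rw [inner_sub_left, horth φ hφ hφF, huφ, sub_zero]
  have hvf : (inner ℝ (f - u) f : ℝ) = 0 := by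
    have hcl : ((Submodule.span ℝ Φ).topologicalClosure : Set H) ⊆
        {w : H | (inner ℝ (f - u) w : ℝ) = 0} := by
      rw [Submodule.topologicalClosure_coe]
      refine closure_minimal (fun w hw => inner_span_right hv hw) ?_
      exact isClosed_eq (Continuous.inner (𝕜 := ℝ) continuous_const continuous_id)
        continuous_const
    exact hcl hf
  have hvu : (inner ℝ (f - u) u : ℝ) = 0 := by
    rw [real_inner_comm]
    exact inner_projL_sub_right S f huS
  have hfu : f - u = 0 := by
    refine (inner_self_eq_zero (𝕜 := ℝ)).1 ?_
    rw [inner_sub_right, hvf, hvu, sub_zero]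
  rw [show f = u by rwa [sub_eq_zero] at hfu]
  exact huS

end SpanOrth

section Kill

variable {J ks : Set ℝ} {Φ : Set (L2S J)} {a b c : ℝ}

lemma barAt_subset_midAt : barAt J ks Φ a ⊆ midAt J ks Φ a := diff_subset

lemma midAt_subset : midAt J ks Φ a ⊆ Φ := fun _ hφ => hφ.1.1

lemma midAt_suppIn {φ : L2S J} (hφ : φ ∈ midAt J ks Φ a) : SuppIn J φ (IccPS ks a) :=
  hφ.1.2

lemma kill_aux (hCB : CenteredBasis J ks Φ) (hb : b ∈ ks) {S : Set (L2S J)}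
    (hS : S ⊆ midAt J ks Φ b ∪ barSucc J ks Φ b) {v : L2S J}
    (hv : v ∈ Submodule.span ℝ S) (hz : indL2 J (IccS ks b) v = 0) : v = 0 := by
  have hv' : v ∈ Submodule.span ℝ (midAt J ks Φ b ∪ barSucc J ks Φ b) :=
    Submodule.span_mono hS hv
  obtain ⟨l, hl⟩ := (Finsupp.mem_span_iff_linearCombination ℝ _ v).1 hv'
  have hli := hCB.2.2 b hb
  have happ := Finsupp.apply_linearCombination (R := ℝ) (indLM J (IccS ks b))
    (Subtype.val : (midAt J ks Φ b ∪ barSucc J ks Φ b : Set (L2S J)) → L2S J) l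
  rw [hl] at happ
  have hz' : Finsupp.linearCombination ℝ
      (fun φ : ↥(midAt J ks Φ b ∪ barSucc J ks Φ b) => indL2 J (IccS ks b) (φ : L2S J)) l = 0 := by
    have : indLM J (IccS ks b) v = 0 := hz
    rw [this] at happ
    exact happ.symm
  have hl0 : l = 0 := linearIndependent_iff.1 hli l hz'
  rw [← hl, hl0, map_zero]

lemma barAt_eq_empty (hJ : J.OrdConnected) (hks : IsKnotSeq J ks)
    (hne : ¬{b ∈ ks | b < c}.Nonempty) : barAt J ks Φ c = ∅ := by
  rw [Set.eq_empty_iff_forall_notMem]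
  rintro φ ⟨⟨⟨hφΦ, hsupp⟩, -⟩, hnb⟩
  refine hnb ⟨hφΦ, ?_⟩
  have hJa := mem_Ici_of_pred_empty hks hne
  filter_upwards [hsupp, ae_restrict_mem hJ.measurableSet] with x hx hxJ hxI
  exact hx fun hPS => hxI ⟨hJa x hxJ, hPS.2⟩

lemma midAt_eq_empty_max (hJ : J.OrdConnected) (hks : IsKnotSeq J ks)
    (hnesucc : ¬{b ∈ ks | c < b}.Nonempty) (hnepred : {b ∈ ks | b < c}.Nonempty) :
    midAt J ks Φ c = ∅ := by
  rw [Set.eq_empty_iff_forall_notMem]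
  rintro φ ⟨⟨hφΦ, hsupp⟩, hnbp⟩
  refine hnbp ?_
  unfold brevePred
  rw [if_pos hnepred]
  refine ⟨hφΦ, ?_⟩
  have hJa := mem_Iic_of_succ_empty hks hnesucc
  filter_upwards [hsupp, ae_restrict_mem hJ.measurableSet] with x hx hxJ hxI
  refine hx fun hPS => hxI ⟨hPS.1, hJa x hxJ⟩

lemma ae_ne_restrict (c : ℝ) : ∀ᵐ x ∂volume.restrict J, x ≠ c := by
  have : volume.restrict J {c} = 0 := restrict_null_singleton subset_rfl
  filter_upwards [measure_eq_zero_iff_ae_notMem.mp this] with x hx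
  simpa using hx

lemma span_barAt_eq_zero_right (hCB : CenteredBasis J ks Φ) (hc : c ∈ ks) {w : L2S J}
    (hw : w ∈ Submodule.span ℝ (barAt J ks Φ c))
    (hvan : ∀ᵐ x ∂volume.restrict J, c < x → w x = 0) : w = 0 := by
  refine kill_aux hCB hc (fun φ hφ => Or.inl (barAt_subset_midAt hφ)) hw ?_
  refine indL2_eq_zero (measurableSet_IccS ks c) ?_
  filter_upwards [hvan, ae_ne_restrict c] with x h1 h2 hx
  exact h1 (lt_of_le_of_ne hx.1 (Ne.symm h2))

lemma span_barAt_eq_zero_left (hJ : J.OrdConnected) (hks : IsKnotSeq J ks)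
    (hCB : CenteredBasis J ks Φ) (hc : c ∈ ks) {w : L2S J}
    (hw : w ∈ Submodule.span ℝ (barAt J ks Φ c))
    (hvan : ∀ᵐ x ∂volume.restrict J, x < c → w x = 0) : w = 0 := by
  by_cases hne : {b ∈ ks | b < c}.Nonempty
  · obtain ⟨p, hp⟩ := exists_isSucc_pred hJ hks hc hne
    refine kill_aux hCB hp.1 (fun φ hφ => Or.inr ?_) hw ?_
    · unfold barSucc
      rw [if_pos ⟨c, hc, hp.2.2.1⟩, hp.succR_eq]
      exact hφ
    · refine indL2_eq_zero (measurableSet_IccS ks p) ?_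
      filter_upwards [hvan, ae_ne_restrict c] with x h1 h2 hx
      have hxc : x ≤ c := EReal.coe_le_coe_iff.1 (hx.2.trans_eq hp.succE_eq)
      exact h1 (lt_of_le_of_ne hxc h2)
  · rw [barAt_eq_empty hJ hks hne] at hw
    simpa using hw

lemma finite_not_vanish (hJ : J.OrdConnected) (hLF : LocFin J Φ) {c d : ℝ}
    (hc : c ∈ J) (hd : d ∈ J) :
    {φ ∈ Φ | ¬ ∀ᵐ x ∂volume.restrict J, x ∈ Icc c d → φ x = 0}.Finite :=
  hLF _ isCompact_Icc (hJ.out hc hd)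

lemma barAt_finite (hJ : J.OrdConnected) (hks : IsKnotSeq J ks)
    (hCB : CenteredBasis J ks Φ) (hc : c ∈ ks) : (barAt J ks Φ c).Finite := by
  by_cases hnep : {b ∈ ks | b < c}.Nonempty
  swap
  · rw [barAt_eq_empty hJ hks hnep]
    exact finite_empty
  by_cases hnes : {b ∈ ks | c < b}.Nonempty
  swap
  · refine Set.Finite.subset ?_ (barAt_subset_midAt (a := c))
    rw [midAt_eq_empty_max hJ hks hnes hnep]
    exact finite_empty
  obtain ⟨q, hq⟩ := exists_isSucc_succ hJ hks hc hnes
  refine (finite_not_vanish hJ hCB.1 (hks.subset hc) (hks.subset hq.2.1)).subset ?_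
  rintro φ ⟨⟨⟨hφΦ, hsupp⟩, hnbp⟩, hnb⟩
  refine ⟨hφΦ, fun hvan => ?_⟩
  refine hnbp ?_
  unfold brevePred
  rw [if_pos hnep]
  refine ⟨hφΦ, ?_⟩
  filter_upwards [hsupp, hvan] with x h1 h2 hx
  by_cases hx1 : (predE ks c) ≤ (x : EReal)
  · by_cases hx2 : x ≤ c
    · exact absurd ⟨hx1, hx2⟩ hx
    · push_neg at hx2
      by_cases hx3 : (x : EReal) ≤ succE ks c
      · exact h2 ⟨hx2.le, EReal.coe_le_coe_iff.1 (hx3.trans_eq hq.succE_eq)⟩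
      · exact h1 fun hPS => hx3 hPS.2
  · exact h1 fun hPS => hx1 hPS.1

end Kill

section Decomp

variable {J ks : Set ℝ} {Φ : Set (L2S J)} {a a' c : ℝ}

lemma mem_SClos {φ : L2S J} (hφ : φ ∈ Φ) : φ ∈ SClos J Φ :=
  Submodule.le_topologicalClosure _ (Submodule.subset_span hφ)

lemma IccP_subset_IccPS : IccP ks c ⊆ IccPS ks c := fun x hx =>
  ⟨hx.1, (EReal.coe_le_coe_iff.2 hx.2).trans (le_succE ks c)⟩

lemma IccS_subset_IccPS : IccS ks c ⊆ IccPS ks c := fun x hx =>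
  ⟨(predE_le ks c).trans (EReal.coe_le_coe_iff.2 hx.1), hx.2⟩

lemma restrict_null_of_inter_subset (hJm : MeasurableSet J) {S : Set ℝ} {c : ℝ}
    (h : S ∩ J ⊆ {c}) : volume.restrict J S = 0 := by
  rw [Measure.restrict_apply' hJm]
  exact le_antisymm ((measure_mono h).trans_eq (by simp)) zero_le

lemma restrict_null_eq_coe (e : EReal) :
    volume.restrict J {x : ℝ | (x : EReal) = e} = 0 := by
  by_cases h : ∃ x : ℝ, (x : EReal) = e
  · obtain ⟨x0, hx0⟩ := h
    refine restrict_null_singleton (c := x0) fun y hy => ?_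
    have : (y : EReal) = (x0 : EReal) := hy.trans hx0.symm
    exact EReal.coe_eq_coe_iff.1 this
  · exact restrict_null_empty fun y hy => absurd ⟨y, hy⟩ h

lemma suppIn_IccPS_vanish_right (hs : IsSucc ks a a') {f : L2S J}
    (hf : SuppIn J f (IccPS ks a)) :
    ∀ᵐ x ∂volume.restrict J, a' < x → f x = 0 := by
  filter_upwards [hf] with x hx h
  exact hx fun hPS =>
    absurd (EReal.coe_le_coe_iff.1 (hPS.2.trans_eq hs.succE_eq)) (not_le.2 h)

lemma suppIn_IccPS_vanish_left (hs : IsSucc ks a a') {f : L2S J}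
    (hf : SuppIn J f (IccPS ks a')) :
    ∀ᵐ x ∂volume.restrict J, x < a → f x = 0 := by
  filter_upwards [hf] with x hx h
  refine hx fun hPS => absurd ?_ (not_le.2 h)
  exact EReal.coe_le_coe_iff.1 (hs.predE_eq ▸ hPS.1)

/-- Decomposition of an element of `V¹` supported on `[a₋,a₊]` and orthogonal to `V̆¹_a`. -/
lemma decomp_S1a (hJ : J.OrdConnected) (hks : IsKnotSeq J ks)
    (hOCB : OrthoCenteredBasis J ks Φ) (hs : IsSucc ks a a') {f : L2S J}
    (hf : f ∈ SClos J Φ) (hsupp : SuppIn J f (IccPS ks a))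
    (horth : ∀ χ ∈ Φ, SuppIn J χ (IccS ks a) → (inner ℝ f χ : ℝ) = 0) :
    ∃ w t : L2S J, SuppIn J w (Iic a) ∧ t ∈ Submodule.span ℝ (barAt J ks Φ a) ∧ f = w + t := by
  obtain ⟨hCB, hpair⟩ := hOCB
  have hwin : ∃ cc : ℝ, cc ∈ J ∧
      (∀ᵐ x ∂volume.restrict J, x ∈ IccPS ks a → x ∈ Icc cc a') := by
    by_cases hnep : {b ∈ ks | b < a}.Nonempty
    · obtain ⟨p0, hp0ks, hp0a⟩ := hnep
      refine ⟨p0, hks.subset hp0ks, Filter.Eventually.of_forall fun x hx =>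
        ⟨EReal.coe_le_coe_iff.1 ((le_predE hp0ks hp0a).trans hx.1),
         EReal.coe_le_coe_iff.1 (hx.2.trans_eq hs.succE_eq)⟩⟩
    · refine ⟨a, hks.subset hs.1, ?_⟩
      filter_upwards [ae_restrict_mem hJ.measurableSet] with x hxJ hx
      exact ⟨mem_Ici_of_pred_empty hks hnep x hxJ,
        EReal.coe_le_coe_iff.1 (hx.2.trans_eq hs.succE_eq)⟩
  obtain ⟨cc, hccJ, hccae⟩ := hwin
  set F := {φ ∈ Φ | ¬ ∀ᵐ x ∂volume.restrict J, x ∈ Icc cc a' → φ x = 0} with hFdef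
  have hFfin : F.Finite := finite_not_vanish hJ hCB.1 hccJ (hks.subset hs.2.1)
  have hfF : f ∈ Submodule.span ℝ F :=
    mem_span_of_orthogonal hpair (sep_subset _ _) hFfin hf fun φ hφ hφF =>
      inner_eq_zero_of_vanish hsupp hccae (not_not.1 fun hv => hφF ⟨hφ, hv⟩)
  set T := {χ ∈ Φ | SuppIn J χ (IccS ks a) ∨ SuppIn J χ (Ici a')} with hTdef
  have hfT : ∀ χ ∈ T, (inner ℝ f χ : ℝ) = 0 := by
    rintro χ ⟨hχΦ, hd | hd⟩
    · exact horth χ hχΦ hd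
    · refine inner_eq_zero_of_suppIn hsupp hd
        (restrict_null_singleton (c := a') fun x hx => ?_)
      exact Set.mem_singleton_iff.2
        (le_antisymm (EReal.coe_le_coe_iff.1 (hx.1.2.trans_eq hs.succE_eq)) hx.2)
  have hfFT : f ∈ Submodule.span ℝ (F \ T) :=
    mem_span_diff hpair (sep_subset _ _) (sep_subset _ _) hfF hfT
  have hcls : F \ T ⊆ {χ ∈ Φ | SuppIn J χ (Iic a)} ∪
      (barAt J ks Φ a ∪ barAt J ks Φ a') := by
    rintro χ ⟨hχF, hχT⟩
    have hχΦ : χ ∈ Φ := hχF.1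
    have hχmid : χ ∈ ⋃ b ∈ ks, midAt J ks Φ b := hCB.2.1 ▸ hχΦ
    simp only [Set.mem_iUnion] at hχmid
    obtain ⟨b, hb, hχb⟩ := hχmid
    have hsuppb := midAt_suppIn hχb
    rcases hs.2.2.2 b hb with hble | hage
    · rcases eq_or_lt_of_le hble with rfl | hlt
      · by_cases hbr : SuppIn J χ (IccS ks b)
        · exact absurd ⟨hχΦ, Or.inl hbr⟩ hχT
        · exact Or.inr (Or.inl ⟨hχb, fun hmem => hbr hmem.2⟩)
      · refine Or.inl ⟨hχΦ, hsuppb.mono fun x hx => ?_⟩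
        exact EReal.coe_le_coe_iff.1 (hx.2.trans (succE_le_s8 hs.1 hlt))
    · rcases eq_or_lt_of_le hage with heq | hlt
      · subst heq
        by_cases hbr : SuppIn J χ (IccS ks a')
        · exact absurd ⟨hχΦ, Or.inr (hbr.mono fun x hx => hx.1)⟩ hχT
        · exact Or.inr (Or.inr ⟨hχb, fun hmem => hbr hmem.2⟩)
      · refine absurd ⟨hχΦ, Or.inr (hsuppb.mono fun x hx => ?_)⟩ hχT
        exact EReal.coe_le_coe_iff.1 ((le_predE hs.2.1 hlt).trans hx.1)
  have hsplit : f ∈ Submodule.span ℝ {χ ∈ Φ | SuppIn J χ (Iic a)} ⊔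
      (Submodule.span ℝ (barAt J ks Φ a) ⊔ Submodule.span ℝ (barAt J ks Φ a')) := by
    rw [← Submodule.span_union, ← Submodule.span_union]
    exact Submodule.span_mono hcls hfFT
  obtain ⟨w, hw, tr, htr, hwtr⟩ := Submodule.mem_sup.1 hsplit
  obtain ⟨t, ht, r, hr, htr'⟩ := Submodule.mem_sup.1 htr
  have hwsupp : SuppIn J w (Iic a) := span_suppIn (fun g hg => hg.2) hw
  have htsupp : SuppIn J t (IccPS ks a) :=
    span_suppIn (fun g hg => midAt_suppIn (barAt_subset_midAt hg)) ht
  have hfr : r = f - w - t := by rw [← hwtr, ← htr']; abel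
  have hrvan : ∀ᵐ x ∂volume.restrict J, a' < x → r x = 0 := by
    rw [hfr]
    filter_upwards [Lp.coeFn_sub (f - w) t, Lp.coeFn_sub f w,
      suppIn_IccPS_vanish_right hs hsupp, hwsupp,
      suppIn_IccPS_vanish_right hs htsupp] with x e1 e2 v1 v2 v3 hx
    rw [e1, Pi.sub_apply, e2, Pi.sub_apply, v1 hx,
      v2 (not_le.2 (hs.2.2.1.trans hx)), v3 hx]
    ring
  have hr0 : r = 0 := span_barAt_eq_zero_right hCB hs.2.1 hr hrvan
  exact ⟨w, t, hwsupp, ht, by rw [← hwtr, ← htr', hr0, add_zero]⟩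

/-- Decomposition of an element of `V¹` supported on `[a,a₊₊]`. -/
lemma decomp_S1b (hJ : J.OrdConnected) (hks : IsKnotSeq J ks)
    (hOCB : OrthoCenteredBasis J ks Φ) (hs : IsSucc ks a a') {f : L2S J}
    (hf : f ∈ SClos J Φ) (hsupp : SuppIn J f (IccPS ks a')) :
    ∃ s u v : L2S J, s ∈ Submodule.span ℝ {χ ∈ Φ | SuppIn J χ (IccS ks a)} ∧
      SuppIn J u (Ici a') ∧ v ∈ Submodule.span ℝ (barAt J ks Φ a') ∧ f = s + u + v := by
  obtain ⟨hCB, hpair⟩ := hOCB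
  have hwin : ∃ dd : ℝ, dd ∈ J ∧
      (∀ᵐ x ∂volume.restrict J, x ∈ IccPS ks a' → x ∈ Icc a dd) := by
    by_cases hnes : {b ∈ ks | a' < b}.Nonempty
    · obtain ⟨q0, hq0ks, hq0a⟩ := hnes
      refine ⟨q0, hks.subset hq0ks, Filter.Eventually.of_forall fun x hx =>
        ⟨EReal.coe_le_coe_iff.1 (hs.predE_eq ▸ hx.1),
         EReal.coe_le_coe_iff.1 (hx.2.trans (succE_le_s8 hq0ks hq0a))⟩⟩
    · refine ⟨a', hks.subset hs.2.1, ?_⟩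
      filter_upwards [ae_restrict_mem hJ.measurableSet] with x hxJ hx
      exact ⟨EReal.coe_le_coe_iff.1 (hs.predE_eq ▸ hx.1),
        mem_Iic_of_succ_empty hks hnes x hxJ⟩
  obtain ⟨dd, hddJ, hddae⟩ := hwin
  set F := {φ ∈ Φ | ¬ ∀ᵐ x ∂volume.restrict J, x ∈ Icc a dd → φ x = 0} with hFdef
  have hFfin : F.Finite := finite_not_vanish hJ hCB.1 (hks.subset hs.1) hddJ
  have hfF : f ∈ Submodule.span ℝ F :=
    mem_span_of_orthogonal hpair (sep_subset _ _) hFfin hf fun φ hφ hφF =>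
      inner_eq_zero_of_vanish hsupp hddae (not_not.1 fun hv => hφF ⟨hφ, hv⟩)
  set T := {χ ∈ Φ | SuppIn J χ (Iic a)} with hTdef
  have hfT : ∀ χ ∈ T, (inner ℝ f χ : ℝ) = 0 := by
    rintro χ ⟨hχΦ, hd⟩
    refine inner_eq_zero_of_suppIn hsupp hd
      (restrict_null_singleton (c := a) fun x hx => ?_)
    exact Set.mem_singleton_iff.2
      (le_antisymm hx.2 (EReal.coe_le_coe_iff.1 (hs.predE_eq ▸ hx.1.1)))
  have hfFT : f ∈ Submodule.span ℝ (F \ T) :=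
    mem_span_diff hpair (sep_subset _ _) (sep_subset _ _) hfF hfT
  have hcls : F \ T ⊆ {χ ∈ Φ | SuppIn J χ (IccS ks a)} ∪
      (barAt J ks Φ a ∪ ({χ ∈ Φ | SuppIn J χ (Ici a')} ∪ barAt J ks Φ a')) := by
    rintro χ ⟨hχF, hχT⟩
    have hχΦ : χ ∈ Φ := hχF.1
    have hχmid : χ ∈ ⋃ b ∈ ks, midAt J ks Φ b := hCB.2.1 ▸ hχΦ
    simp only [Set.mem_iUnion] at hχmid
    obtain ⟨b, hb, hχb⟩ := hχmid
    have hsuppb := midAt_suppIn hχb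
    rcases hs.2.2.2 b hb with hble | hage
    · rcases eq_or_lt_of_le hble with rfl | hlt
      · by_cases hbr : SuppIn J χ (IccS ks b)
        · exact Or.inl ⟨hχΦ, hbr⟩
        · exact Or.inr (Or.inl ⟨hχb, fun hmem => hbr hmem.2⟩)
      · refine absurd ⟨hχΦ, hsuppb.mono fun x hx => ?_⟩ hχT
        exact EReal.coe_le_coe_iff.1 (hx.2.trans (succE_le_s8 hs.1 hlt))
    · rcases eq_or_lt_of_le hage with heq | hlt
      · subst heq
        by_cases hbr : SuppIn J χ (IccS ks a')
        · exact Or.inr (Or.inr (Or.inl ⟨hχΦ, hbr.mono fun x hx => hx.1⟩))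
        · exact Or.inr (Or.inr (Or.inr ⟨hχb, fun hmem => hbr hmem.2⟩))
      · refine Or.inr (Or.inr (Or.inl ⟨hχΦ, hsuppb.mono fun x hx => ?_⟩))
        exact EReal.coe_le_coe_iff.1 ((le_predE hs.2.1 hlt).trans hx.1)
  have hsplit : f ∈ Submodule.span ℝ {χ ∈ Φ | SuppIn J χ (IccS ks a)} ⊔
      (Submodule.span ℝ (barAt J ks Φ a) ⊔
        (Submodule.span ℝ {χ ∈ Φ | SuppIn J χ (Ici a')} ⊔
          Submodule.span ℝ (barAt J ks Φ a'))) := by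
    rw [← Submodule.span_union, ← Submodule.span_union, ← Submodule.span_union]
    exact Submodule.span_mono hcls hfFT
  obtain ⟨s, hsmem, rest1, hrest1, hsum1⟩ := Submodule.mem_sup.1 hsplit
  obtain ⟨t, ht, rest2, hrest2, hsum2⟩ := Submodule.mem_sup.1 hrest1
  obtain ⟨u, hu, v, hv, hsum3⟩ := Submodule.mem_sup.1 hrest2
  have hssupp : SuppIn J s (IccS ks a) := span_suppIn (fun g hg => hg.2) hsmem
  have husupp : SuppIn J u (Ici a') := span_suppIn (fun g hg => hg.2) hu
  have hvsupp : SuppIn J v (IccPS ks a') :=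
    span_suppIn (fun g hg => midAt_suppIn (barAt_subset_midAt hg)) hv
  have hft : t = f - s - u - v := by rw [← hsum1, ← hsum2, ← hsum3]; abel
  have htvan : ∀ᵐ x ∂volume.restrict J, x < a → t x = 0 := by
    rw [hft]
    filter_upwards [Lp.coeFn_sub (f - s - u) v, Lp.coeFn_sub (f - s) u, Lp.coeFn_sub f s,
      suppIn_IccPS_vanish_left hs hsupp, hssupp, husupp,
      suppIn_IccPS_vanish_left hs hvsupp] with x e1 e2 e3 v1 v2 v3 v4 hx
    rw [e1, Pi.sub_apply, e2, Pi.sub_apply, e3, Pi.sub_apply, v1 hx,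
      v2 (fun hmem => absurd hmem.1 (not_le.2 hx)),
      v3 (not_le.2 (hx.trans hs.2.2.1)), v4 hx]
    ring
  have ht0 : t = 0 := span_barAt_eq_zero_left hJ hks hCB hs.1 ht htvan
  refine ⟨s, u, v, hsmem, husupp, hv, ?_⟩
  rw [← hsum1, ← hsum2, ← hsum3, ht0]
  abel

/-- The structure result: any element of `V` supported on `[c₋,c₊]` and orthogonal to
`V̆_{c₋} ⊕ V̆_c` lies in the span of `Φ̄_c`. -/
lemma decomp_S2 (hJ : J.OrdConnected) (hks : IsKnotSeq J ks)
    (hOCB : OrthoCenteredBasis J ks Φ) (hc : c ∈ ks) {f : L2S J}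
    (hf : f ∈ SClos J Φ) (hsupp : SuppIn J f (IccPS ks c))
    (horthP : ∀ g ∈ VbrevePred J ks (SClos J Φ) c, (inner ℝ f g : ℝ) = 0)
    (horthB : ∀ g ∈ Vbreve J ks (SClos J Φ) c, (inner ℝ f g : ℝ) = 0) :
    f ∈ Submodule.span ℝ (barAt J ks Φ c) := by
  obtain ⟨hCB, hpair⟩ := hOCB
  obtain ⟨p, hpd, hpe⟩ : ∃ p, ({b ∈ ks | b < c}.Nonempty → IsSucc ks p c) ∧
      (¬{b ∈ ks | b < c}.Nonempty → p = c) := by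
    by_cases hnep : {b ∈ ks | b < c}.Nonempty
    · obtain ⟨p, hp⟩ := exists_isSucc_pred hJ hks hc hnep
      exact ⟨p, fun _ => hp, fun h => absurd hnep h⟩
    · exact ⟨c, fun h => absurd h hnep, fun _ => rfl⟩
  obtain ⟨q, hqd, hqe⟩ : ∃ q, ({b ∈ ks | c < b}.Nonempty → IsSucc ks c q) ∧
      (¬{b ∈ ks | c < b}.Nonempty → q = c) := by
    by_cases hnes : {b ∈ ks | c < b}.Nonempty
    · obtain ⟨q, hq⟩ := exists_isSucc_succ hJ hks hc hnes
      exact ⟨q, fun _ => hq, fun h => absurd hnes h⟩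
    · exact ⟨c, fun h => absurd h hnes, fun _ => rfl⟩
  have hwin : ∃ cc dd : ℝ, cc ∈ J ∧ dd ∈ J ∧
      (∀ᵐ x ∂volume.restrict J, x ∈ IccPS ks c → x ∈ Icc cc dd) := by
    refine ⟨p, q, ?_, ?_, ?_⟩
    · by_cases hnep : {b ∈ ks | b < c}.Nonempty
      · exact hks.subset (hpd hnep).1
      · rw [hpe hnep]; exact hks.subset hc
    · by_cases hnes : {b ∈ ks | c < b}.Nonempty
      · exact hks.subset (hqd hnes).2.1
      · rw [hqe hnes]; exact hks.subset hc
    · have hl : ∀ᵐ x ∂volume.restrict J, x ∈ IccPS ks c → p ≤ x := by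
        by_cases hnep : {b ∈ ks | b < c}.Nonempty
        · refine Filter.Eventually.of_forall fun x hx => ?_
          exact EReal.coe_le_coe_iff.1 (((hpd hnep).predE_eq ▸ hx.1))
        · rw [hpe hnep]
          filter_upwards [ae_restrict_mem hJ.measurableSet] with x hxJ _
          exact mem_Ici_of_pred_empty hks hnep x hxJ
      have hr : ∀ᵐ x ∂volume.restrict J, x ∈ IccPS ks c → x ≤ q := by
        by_cases hnes : {b ∈ ks | c < b}.Nonempty
        · refine Filter.Eventually.of_forall fun x hx => ?_
          exact EReal.coe_le_coe_iff.1 (hx.2.trans_eq (hqd hnes).succE_eq)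
        · rw [hqe hnes]
          filter_upwards [ae_restrict_mem hJ.measurableSet] with x hxJ _
          exact mem_Iic_of_succ_empty hks hnes x hxJ
      filter_upwards [hl, hr] with x h1 h2 hx
      exact ⟨h1 hx, h2 hx⟩
  obtain ⟨cc, dd, hccJ, hddJ, hae⟩ := hwin
  set F := {φ ∈ Φ | ¬ ∀ᵐ x ∂volume.restrict J, x ∈ Icc cc dd → φ x = 0} with hFdef
  have hFfin : F.Finite := finite_not_vanish hJ hCB.1 hccJ hddJ
  have hfF : f ∈ Submodule.span ℝ F :=
    mem_span_of_orthogonal hpair (sep_subset _ _) hFfin hf fun φ hφ hφF =>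
      inner_eq_zero_of_vanish hsupp hae (not_not.1 fun hv => hφF ⟨hφ, hv⟩)
  set T := {χ ∈ Φ | SuppIn J χ (IccP ks c) ∨ SuppIn J χ (IccS ks c) ∨
      SuppIn J χ {x : ℝ | (x : EReal) ≤ predE ks c} ∨
      SuppIn J χ {x : ℝ | succE ks c ≤ (x : EReal)}} with hTdef
  have hfT : ∀ χ ∈ T, (inner ℝ f χ : ℝ) = 0 := by
    rintro χ ⟨hχΦ, hd⟩
    rcases hd with hd | hd | hd | hd
    · by_cases hnep : {b ∈ ks | b < c}.Nonempty
      · refine horthP χ ?_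
        unfold VbrevePred
        rw [if_pos hnep]
        exact ⟨mem_SClos hχΦ, hd⟩
      · refine inner_eq_zero_of_suppIn hsupp hd
          (restrict_null_of_inter_subset hJ.measurableSet (c := c) fun x hx => ?_)
        exact Set.mem_singleton_iff.2
          (le_antisymm hx.1.2.2 (mem_Ici_of_pred_empty hks hnep x hx.2))
    · exact horthB χ ⟨mem_SClos hχΦ, hd⟩
    · refine inner_eq_zero_of_suppIn hsupp hd ?_
      have hsub : IccPS ks c ∩ {x : ℝ | (x : EReal) ≤ predE ks c} ⊆
          {x : ℝ | (x : EReal) = predE ks c} :=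
        fun x hx => le_antisymm hx.2 hx.1.1
      exact measure_mono_null hsub (restrict_null_eq_coe _)
    · refine inner_eq_zero_of_suppIn hsupp hd ?_
      have hsub : IccPS ks c ∩ {x : ℝ | succE ks c ≤ (x : EReal)} ⊆
          {x : ℝ | (x : EReal) = succE ks c} :=
        fun x hx => le_antisymm hx.1.2 hx.2
      exact measure_mono_null hsub (restrict_null_eq_coe _)
  have hfFT : f ∈ Submodule.span ℝ (F \ T) :=
    mem_span_diff hpair (sep_subset _ _) (sep_subset _ _) hfF hfT
  have hcls : F \ T ⊆ barAt J ks Φ p ∪ (barAt J ks Φ c ∪ barAt J ks Φ q) := by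
    rintro χ ⟨hχF, hχT⟩
    have hχΦ : χ ∈ Φ := hχF.1
    have hχmid : χ ∈ ⋃ b ∈ ks, midAt J ks Φ b := hCB.2.1 ▸ hχΦ
    simp only [Set.mem_iUnion] at hχmid
    obtain ⟨b, hb, hχb⟩ := hχmid
    have hsuppb := midAt_suppIn hχb
    rcases lt_trichotomy b c with hlt | heqbc | hgt
    · have hp := hpd ⟨b, hb, hlt⟩
      rcases (hp.2.2.2 b hb).resolve_right (not_le.2 hlt) with hbp
      rcases eq_or_lt_of_le hbp with heq | hbplt
      · rw [heq] at hχb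
        by_cases hbr : SuppIn J χ (IccS ks p)
        · refine absurd ⟨hχΦ, Or.inl ?_⟩ hχT
          have hIP : IccS ks p = IccP ks c := hp.IccS_eq.trans hp.IccP_succ_eq.symm
          exact hIP ▸ hbr
        · exact Or.inl ⟨hχb, fun hmem => hbr hmem.2⟩
      · refine absurd ⟨hχΦ, Or.inr (Or.inr (Or.inl (hsuppb.mono fun x hx => ?_)))⟩ hχT
        exact hx.2.trans ((succE_le_s8 hp.1 hbplt).trans_eq hp.predE_eq.symm)
    · rw [heqbc] at hχb
      by_cases hbr : SuppIn J χ (IccS ks c)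
      · exact absurd ⟨hχΦ, Or.inr (Or.inl hbr)⟩ hχT
      · exact Or.inr (Or.inl ⟨hχb, fun hmem => hbr hmem.2⟩)
    · have hq := hqd ⟨b, hb, hgt⟩
      rcases (hq.2.2.2 b hb).resolve_left (not_le.2 hgt) with hqb
      rcases eq_or_lt_of_le hqb with heq | hqblt
      · rw [← heq] at hχb
        by_cases hbr : SuppIn J χ (IccS ks q)
        · refine absurd ⟨hχΦ, Or.inr (Or.inr (Or.inr (hbr.mono fun x hx => ?_)))⟩ hχT
          rw [hq.succE_eq]
          exact EReal.coe_le_coe_iff.2 hx.1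
        · exact Or.inr (Or.inr ⟨hχb, fun hmem => hbr hmem.2⟩)
      · refine absurd ⟨hχΦ, Or.inr (Or.inr (Or.inr (hsuppb.mono fun x hx => ?_)))⟩ hχT
        exact (hq.succE_eq.le.trans (le_predE hq.2.1 hqblt)).trans hx.1
  have hsplit : f ∈ Submodule.span ℝ (barAt J ks Φ p) ⊔
      (Submodule.span ℝ (barAt J ks Φ c) ⊔ Submodule.span ℝ (barAt J ks Φ q)) := by
    rw [← Submodule.span_union, ← Submodule.span_union]
    exact Submodule.span_mono hcls hfFT
  obtain ⟨w, hw, tr, htr, hwtr⟩ := Submodule.mem_sup.1 hsplit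
  obtain ⟨t, ht, r, hr, htr'⟩ := Submodule.mem_sup.1 htr
  have htsupp : SuppIn J t (IccPS ks c) :=
    span_suppIn (fun g hg => midAt_suppIn (barAt_subset_midAt hg)) ht
  have hwsupp : SuppIn J w (IccPS ks p) :=
    span_suppIn (fun g hg => midAt_suppIn (barAt_subset_midAt hg)) hw
  have hrsupp : SuppIn J r (IccPS ks q) :=
    span_suppIn (fun g hg => midAt_suppIn (barAt_subset_midAt hg)) hr
  have hw0 : w = 0 := by
    by_cases hnep : {b ∈ ks | b < c}.Nonempty
    · have hp := hpd hnep
      have hfw : w = f - t - r := by rw [← hwtr, ← htr']; abel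
      refine span_barAt_eq_zero_left hJ hks hCB hp.1 hw ?_
      rw [hfw]
      have hfvan : ∀ᵐ x ∂volume.restrict J, x < p → f x = 0 :=
        suppIn_IccPS_vanish_left hp hsupp
      have htvan : ∀ᵐ x ∂volume.restrict J, x < p → t x = 0 :=
        suppIn_IccPS_vanish_left hp htsupp
      have hrvan : ∀ᵐ x ∂volume.restrict J, x < p → r x = 0 := by
        by_cases hnes : {b ∈ ks | c < b}.Nonempty
        · have hq := hqd hnes
          filter_upwards [hrsupp] with x hx hxp
          refine hx fun hPS => absurd (EReal.coe_le_coe_iff.1 (hq.predE_eq ▸ hPS.1)) ?_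
          exact not_le.2 (hxp.trans hp.2.2.1)
        · rw [hqe hnes] at hrsupp
          filter_upwards [suppIn_IccPS_vanish_left hp hrsupp] with x hx hxp
          exact hx hxp
      filter_upwards [Lp.coeFn_sub (f - t) r, Lp.coeFn_sub f t, hfvan, htvan, hrvan]
        with x e1 e2 v1 v2 v3 hx
      rw [e1, Pi.sub_apply, e2, Pi.sub_apply, v1 hx, v2 hx, v3 hx]
      ring
    · rw [barAt_eq_empty hJ hks (hpe hnep ▸ hnep)] at hw
      simpa using hw
  have hr0 : r = 0 := by
    by_cases hnes : {b ∈ ks | c < b}.Nonempty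
    · have hq := hqd hnes
      have hfr : r = f - w - t := by rw [← hwtr, ← htr']; abel
      refine span_barAt_eq_zero_right hCB hq.2.1 hr ?_
      rw [hfr]
      have hfvan : ∀ᵐ x ∂volume.restrict J, q < x → f x = 0 :=
        suppIn_IccPS_vanish_right hq hsupp
      have htvan : ∀ᵐ x ∂volume.restrict J, q < x → t x = 0 :=
        suppIn_IccPS_vanish_right hq htsupp
      have hwvan : ∀ᵐ x ∂volume.restrict J, q < x → w x = 0 := by
        by_cases hnep : {b ∈ ks | b < c}.Nonempty
        · have hp := hpd hnep
          filter_upwards [hwsupp] with x hx hxq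
          refine hx fun hPS => ?_
          have h1 : (x : EReal) ≤ (c : EReal) := hPS.2.trans_eq hp.succE_eq
          exact absurd (EReal.coe_le_coe_iff.1 h1)
            (not_le.2 (hq.2.2.1.trans hxq))
        · rw [hpe hnep] at hwsupp
          filter_upwards [suppIn_IccPS_vanish_right hq hwsupp] with x hx hxq
          exact hx hxq
      filter_upwards [Lp.coeFn_sub (f - w) t, Lp.coeFn_sub f w, hfvan, hwvan, htvan]
        with x e1 e2 v1 v2 v3 hx
      rw [e1, Pi.sub_apply, e2, Pi.sub_apply, v1 hx, v2 hx, v3 hx]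
      ring
    · have hbq : barAt J ks Φ q = ∅ := by
        rw [hqe hnes]
        by_cases hnep : {b ∈ ks | b < c}.Nonempty
        · refine Set.eq_empty_of_subset_empty (barAt_subset_midAt.trans ?_)
          rw [midAt_eq_empty_max hJ hks hnes hnep]
        · exact barAt_eq_empty hJ hks hnep
      rw [hbq] at hr
      simpa using hr
  have : f = t := by rw [← hwtr, ← htr', hw0, hr0, zero_add, add_zero]
  rw [this]
  exact ht

lemma barAt_disjoint (hs : IsSucc ks a a') :
    Disjoint (barAt J ks Φ a) (barAt J ks Φ a') := by
  rw [Set.disjoint_left]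
  rintro χ ⟨hmid, hnb⟩ ⟨hmid', _⟩
  refine hnb ⟨hmid.1.1, ?_⟩
  have h3 := (midAt_suppIn hmid).inter (midAt_suppIn hmid')
  refine h3.mono fun x hx => ?_
  exact ⟨EReal.coe_le_coe_iff.1 (hs.predE_eq ▸ hx.2.1), hx.1.2⟩

lemma Vbar_facts {V : Submodule ℝ (L2S J)} (hV : IsClosed (V : Set (L2S J)))
    {y : L2S J} (hy : y ∈ Vbar J ks V c) :
    y ∈ V ∧ SuppIn J y (IccPS ks c) ∧
      (∀ g ∈ VbrevePred J ks V c, (inner ℝ y g : ℝ) = 0) ∧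
      (∀ g ∈ Vbreve J ks V c, (inner ℝ y g : ℝ) = 0) := by
  obtain ⟨u, hu, rfl⟩ := Submodule.mem_map.1 hy
  set M := VbrevePred J ks V c ⊔ Vbreve J ks V c with hM
  have hval : (LinearMap.id - projL M : L2S J →ₗ[ℝ] L2S J) u = u - projL M u := by
    rw [LinearMap.sub_apply, LinearMap.id_apply]
  have hMV : M ≤ V := by
    refine sup_le ?_ (fun g hg => hg.1)
    unfold VbrevePred
    split_ifs
    · exact fun g hg => hg.1
    · exact bot_le
  have hMsupp : M ≤ suppSub J ⊤ (IccPS ks c) := by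
    refine sup_le ?_ (fun g hg => ⟨trivial, hg.2.mono IccS_subset_IccPS⟩)
    unfold VbrevePred
    split_ifs
    · exact fun g hg => ⟨trivial, hg.2.mono IccP_subset_IccPS⟩
    · exact bot_le
  have hclS : IsClosed ((suppSub J ⊤ (IccPS ks c) : Submodule ℝ (L2S J)) : Set (L2S J)) :=
    isClosed_suppSub isClosed_univ (measurableSet_IccPS ks c)
  have hPMV : projL M u ∈ V :=
    Submodule.topologicalClosure_minimal M hMV hV (projL_mem M u)
  have hPMs : projL M u ∈ suppSub J ⊤ (IccPS ks c) :=
    Submodule.topologicalClosure_minimal M hMsupp hclS (projL_mem M u)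
  have horth : ∀ g ∈ M,
      (inner ℝ ((LinearMap.id - projL M : L2S J →ₗ[ℝ] L2S J) u) g : ℝ) = 0 := by
    intro g hg
    rw [hval, real_inner_comm]
    exact (sub_projL_mem_orthogonal M u) g (M.le_topologicalClosure hg)
  refine ⟨?_, ?_, ?_, ?_⟩
  · rw [hval]; exact Submodule.sub_mem _ hu.1 hPMV
  · rw [hval]
    exact (Submodule.sub_mem _ (⟨trivial, hu.2⟩ : u ∈ suppSub J ⊤ (IccPS ks c)) hPMs).2
  · exact fun g hg => horth g (Submodule.mem_sup_left hg)
  · exact fun g hg => horth g (Submodule.mem_sup_right hg)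

end Decomp

end KnotWavelet
open KnotWavelet in
theorem breve_A_mutually_orthogonal_and_proj_decomp
    (J ks : Set ℝ) (hJ : J.OrdConnected) (hks : IsKnotSeq J ks)
    (Φ₀ Φ₁ : Set (L2S J))
    (h₀ : OrthoCenteredBasis J ks Φ₀) (h₁ : OrthoCenteredBasis J ks Φ₁)
    (V₀ V₁ : Submodule ℝ (L2S J))
    (hV₀ : V₀ = SClos J Φ₀) (hV₁ : V₁ = SClos J Φ₁) (hle : V₀ ≤ V₁) :
    ∀ a a' : ℝ, IsSucc ks a a' →
      Vbreve J ks V₀ a ≤ Vbreve J ks V₁ a ∧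
      Aplus J ks V₀ V₁ a ≤ Vbreve J ks V₁ a ∧
      Aminus J ks V₀ V₁ a' ≤ Vbreve J ks V₁ a ∧
      PerpSub (Vbreve J ks V₀ a) (Aplus J ks V₀ V₁ a) ∧
      PerpSub (Vbreve J ks V₀ a) (Aminus J ks V₀ V₁ a') ∧
      PerpSub (Aplus J ks V₀ V₁ a) (Aminus J ks V₀ V₁ a') ∧
      projSub (Vbreve J ks V₁ a) V₀ =
        Vbreve J ks V₀ a ⊔ Aplus J ks V₀ V₁ a ⊔ Aminus J ks V₀ V₁ a' := by
  subst hV₀ hV₁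
  intro a a' hs
  have hV₀cl : IsClosed ((SClos J Φ₀ : Submodule ℝ (L2S J)) : Set (L2S J)) :=
    Submodule.isClosed_topologicalClosure _
  have hV₁cl : IsClosed ((SClos J Φ₁ : Submodule ℝ (L2S J)) : Set (L2S J)) :=
    Submodule.isClosed_topologicalClosure _
  set X := Vbreve J ks (SClos J Φ₁) a with hXdef
  have hXcl : IsClosed (X : Set (L2S J)) :=
    isClosed_suppSub hV₁cl (measurableSet_IccS ks a)
  have hXtc : X.topologicalClosure = X := hXcl.submodule_topologicalClosure_eq
  have hP : VbrevePred J ks (SClos J Φ₁) a' = X := hs.vbrevePred_eq _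
  have hP₀ : VbrevePred J ks (SClos J Φ₀) a' = Vbreve J ks (SClos J Φ₀) a :=
    hs.vbrevePred_eq _
  have h1 : Vbreve J ks (SClos J Φ₀) a ≤ X := fun f hf => ⟨hle hf.1, hf.2⟩
  have hmemX : ∀ {f : L2S J}, f ∈ X → projL X f = f := fun hf =>
    projL_eq_self (X.le_topologicalClosure hf)
  have hAmin_eq : Aminus J ks (SClos J Φ₀) (SClos J Φ₁) a' =
      (Vbar J ks (SClos J Φ₀) a').map (projL X) := by
    unfold Aminus projSub
    rw [hP]
  have h2 : Aplus J ks (SClos J Φ₀) (SClos J Φ₁) a ≤ X := by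
    rintro f hf
    obtain ⟨y, hy, rfl⟩ := Submodule.mem_map.1 hf
    have := projL_mem X y
    rwa [hXtc] at this
  have h3 : Aminus J ks (SClos J Φ₀) (SClos J Φ₁) a' ≤ X := by
    rw [hAmin_eq]
    rintro f hf
    obtain ⟨y, hy, rfl⟩ := Submodule.mem_map.1 hf
    have := projL_mem X y
    rwa [hXtc] at this
  -- orthogonality of V̆⁰_a with A⁺
  have hperp1 : PerpSub (Vbreve J ks (SClos J Φ₀) a)
      (Aplus J ks (SClos J Φ₀) (SClos J Φ₁) a) := by
    intro f hf g hg
    obtain ⟨y, hy, rfl⟩ := Submodule.mem_map.1 hg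
    obtain ⟨-, -, -, hoB⟩ := Vbar_facts hV₀cl hy
    rw [show (inner ℝ f (projL X y) : ℝ) = inner ℝ (projL X f) y from
      (inner_projL_left X f y).symm, hmemX (h1 hf), real_inner_comm]
    exact hoB f hf
  have hperp2 : PerpSub (Vbreve J ks (SClos J Φ₀) a)
      (Aminus J ks (SClos J Φ₀) (SClos J Φ₁) a') := by
    intro f hf g hg
    rw [hAmin_eq] at hg
    obtain ⟨y, hy, rfl⟩ := Submodule.mem_map.1 hg
    obtain ⟨-, -, hoP, -⟩ := Vbar_facts hV₀cl hy
    rw [show (inner ℝ f (projL X y) : ℝ) = inner ℝ (projL X f) y from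
      (inner_projL_left X f y).symm, hmemX (h1 hf), real_inner_comm]
    exact hoP f (by rw [hP₀]; exact hf)
  -- orthogonality of A⁺ with A⁻
  have hperp3 : PerpSub (Aplus J ks (SClos J Φ₀) (SClos J Φ₁) a)
      (Aminus J ks (SClos J Φ₀) (SClos J Φ₁) a') := by
    intro g1 hg1 g2 hg2
    obtain ⟨y1, hy1, rfl⟩ := Submodule.mem_map.1 hg1
    rw [hAmin_eq] at hg2
    obtain ⟨y2, hy2, rfl⟩ := Submodule.mem_map.1 hg2
    obtain ⟨hy1V, hy1supp, hy1oP, hy1oB⟩ := Vbar_facts hV₀cl hy1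
    obtain ⟨hy2V, hy2supp, hy2oP, hy2oB⟩ := Vbar_facts hV₀cl hy2
    have hidem : projL X (projL X y1) = projL X y1 := projL_eq_self (projL_mem X y1)
    have hred : (inner ℝ (projL X y1) (projL X y2) : ℝ) = inner ℝ (projL X y1) y2 := by
      have := inner_projL_left X (projL X y1) y2
      rw [hidem] at this
      exact this.symm
    rw [hred]
    set z := y1 - projL X y1 with hz
    have hPy1 : projL X y1 = y1 - z := by rw [hz]; abel
    rw [hPy1, inner_sub_left]
    have hy1span : y1 ∈ Submodule.span ℝ (barAt J ks Φ₀ a) :=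
      decomp_S2 hJ hks h₀ hs.1 hy1V hy1supp hy1oP hy1oB
    have hy2span : y2 ∈ Submodule.span ℝ (barAt J ks Φ₀ a') :=
      decomp_S2 hJ hks h₀ hs.2.1 hy2V hy2supp hy2oP hy2oB
    have hinner12 : (inner ℝ y1 y2 : ℝ) = 0 :=
      inner_span_span h₀.2 (fun χ hχ => (barAt_subset_midAt hχ).1.1)
        (fun χ hχ => (barAt_subset_midAt hχ).1.1) (barAt_disjoint hs) hy1span hy2span
    have hXmem := projL_mem X y1
    rw [hXtc] at hXmem
    have hzV₁ : z ∈ SClos J Φ₁ := Submodule.sub_mem _ (hle hy1V) hXmem.1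
    have hzsupp : SuppIn J z (IccPS ks a) := by
      have m1 : y1 ∈ suppSub J ⊤ (IccPS ks a) := ⟨trivial, hy1supp⟩
      have m2 : projL X y1 ∈ suppSub J ⊤ (IccPS ks a) :=
        ⟨trivial, hXmem.2.mono IccS_subset_IccPS⟩
      exact (Submodule.sub_mem _ m1 m2).2
    have hzorth : ∀ χ ∈ Φ₁, SuppIn J χ (IccS ks a) → (inner ℝ z χ : ℝ) = 0 := by
      intro χ hχ hχs
      have hχX : χ ∈ X := ⟨mem_SClos hχ, hχs⟩
      rw [real_inner_comm]
      exact (sub_projL_mem_orthogonal X y1) χ (X.le_topologicalClosure hχX)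
    obtain ⟨w, t, hwsupp, ht, hzwt⟩ := decomp_S1a hJ hks h₁ hs hzV₁ hzsupp hzorth
    obtain ⟨sv, uv, vv, hsv, huv, hvv, hy2dec⟩ :=
      decomp_S1b hJ hks h₁ hs (hle hy2V) hy2supp
    have hvvsupp : SuppIn J vv (IccPS ks a') :=
      span_suppIn (fun g hg => midAt_suppIn (barAt_subset_midAt hg)) hvv
    have htsupp : SuppIn J t (IccPS ks a) :=
      span_suppIn (fun g hg => midAt_suppIn (barAt_subset_midAt hg)) ht
    have hsvsupp : SuppIn J sv (IccS ks a) := span_suppIn (fun g hg => hg.2) hsv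
    have hws : (inner ℝ w sv : ℝ) = 0 :=
      inner_eq_zero_of_suppIn hwsupp hsvsupp (restrict_null_singleton (c := a)
        fun x hx => Set.mem_singleton_iff.2 (le_antisymm hx.1 hx.2.1))
    have hwu : (inner ℝ w uv : ℝ) = 0 :=
      inner_eq_zero_of_suppIn hwsupp huv (restrict_null_empty
        fun x hx => absurd (hx.2.trans hx.1) (not_le.2 hs.2.2.1))
    have hwv : (inner ℝ w vv : ℝ) = 0 :=
      inner_eq_zero_of_suppIn hwsupp hvvsupp (restrict_null_singleton (c := a)
        fun x hx => Set.mem_singleton_iff.2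
          (le_antisymm hx.1 (EReal.coe_le_coe_iff.1 (hs.predE_eq ▸ hx.2.1))))
    have hts : (inner ℝ t sv : ℝ) = 0 :=
      inner_span_span h₁.2 (fun χ hχ => (barAt_subset_midAt hχ).1.1)
        (sep_subset _ _)
        (Set.disjoint_left.2 fun χ hχbar hχbrev => hχbar.2 ⟨hχbrev.1, hχbrev.2⟩)
        ht hsv
    have htu : (inner ℝ t uv : ℝ) = 0 :=
      inner_eq_zero_of_suppIn htsupp huv (restrict_null_singleton (c := a')
        fun x hx => Set.mem_singleton_iff.2 (le_antisymm
          (EReal.coe_le_coe_iff.1 (hx.1.2.trans_eq hs.succE_eq)) hx.2))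
    have htv : (inner ℝ t vv : ℝ) = 0 :=
      inner_span_span h₁.2 (fun χ hχ => (barAt_subset_midAt hχ).1.1)
        (fun χ hχ => (barAt_subset_midAt hχ).1.1) (barAt_disjoint hs) ht hvv
    have hzy2 : (inner ℝ z y2 : ℝ) = 0 := by
      rw [hzwt, hy2dec]
      simp only [inner_add_left, inner_add_right]
      rw [hws, hwu, hwv, hts, htu, htv]
      norm_num
    rw [hinner12, hzy2, sub_zero]
  -- the decomposition
  have hVbarspan : ∀ c, c ∈ ks → Vbar J ks (SClos J Φ₀) c ≤
      Submodule.span ℝ (barAt J ks Φ₀ c) := by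
    intro c hc y hy
    obtain ⟨hyV, hysupp, hyoP, hyoB⟩ := Vbar_facts hV₀cl hy
    exact decomp_S2 hJ hks h₀ hc hyV hysupp hyoP hyoB
  have hVbarleV : ∀ c, Vbar J ks (SClos J Φ₀) c ≤ SClos J Φ₀ := fun c y hy =>
    (Vbar_facts hV₀cl hy).1
  have hsup_le : Vbreve J ks (SClos J Φ₀) a ⊔ Aplus J ks (SClos J Φ₀) (SClos J Φ₁) a ⊔
      Aminus J ks (SClos J Φ₀) (SClos J Φ₁) a' ≤ projSub X (SClos J Φ₀) := by
    refine sup_le (sup_le ?_ ?_) ?_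
    · intro f hf
      exact Submodule.mem_map.2 ⟨f, hf.1, hmemX (h1 hf)⟩
    · exact Submodule.map_mono (hVbarleV a)
    · rw [hAmin_eq]
      exact Submodule.map_mono (hVbarleV a')
  have hfd1 : FiniteDimensional ℝ (Aplus J ks (SClos J Φ₀) (SClos J Φ₁) a) := by
    have hAle : Aplus J ks (SClos J Φ₀) (SClos J Φ₁) a ≤
        (Submodule.span ℝ (barAt J ks Φ₀ a)).map (projL X) :=
      Submodule.map_mono (hVbarspan a hs.1)
    rw [Submodule.map_span] at hAle
    haveI := FiniteDimensional.span_of_finite ℝ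
      ((barAt_finite hJ hks h₀.1 hs.1).image (projL X))
    exact Submodule.finiteDimensional_of_le hAle
  have hfd2 : FiniteDimensional ℝ (Aminus J ks (SClos J Φ₀) (SClos J Φ₁) a') := by
    rw [hAmin_eq]
    have hAle : (Vbar J ks (SClos J Φ₀) a').map (projL X) ≤
        (Submodule.span ℝ (barAt J ks Φ₀ a')).map (projL X) :=
      Submodule.map_mono (hVbarspan a' hs.2.1)
    rw [Submodule.map_span] at hAle
    haveI := FiniteDimensional.span_of_finite ℝ
      ((barAt_finite hJ hks h₀.1 hs.2.1).image (projL X))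
    exact Submodule.finiteDimensional_of_le hAle
  have hRHScl : IsClosed ((Vbreve J ks (SClos J Φ₀) a ⊔
      Aplus J ks (SClos J Φ₀) (SClos J Φ₁) a ⊔
      Aminus J ks (SClos J Φ₀) (SClos J Φ₁) a' : Submodule ℝ (L2S J)) : Set (L2S J)) := by
    haveI := hfd1
    haveI := hfd2
    haveI : FiniteDimensional ℝ (Aplus J ks (SClos J Φ₀) (SClos J Φ₁) a ⊔
        Aminus J ks (SClos J Φ₀) (SClos J Φ₁) a' : Submodule ℝ (L2S J)) :=
      Submodule.finiteDimensional_sup _ _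
    have hVbcl : IsClosed ((Vbreve J ks (SClos J Φ₀) a : Submodule ℝ (L2S J)) :
        Set (L2S J)) := isClosed_suppSub hV₀cl (measurableSet_IccS ks a)
    rw [sup_assoc]
    exact isClosed_sup_fd hVbcl
  have hVb₀cl : IsClosed ((Vbreve J ks (SClos J Φ₀) a : Submodule ℝ (L2S J)) :
      Set (L2S J)) := isClosed_suppSub hV₀cl (measurableSet_IccS ks a)
  -- generators map into the decomposition
  have hgen : ∀ φ ∈ Φ₀, projL X φ ∈ Vbreve J ks (SClos J Φ₀) a ⊔
      Aplus J ks (SClos J Φ₀) (SClos J Φ₁) a ⊔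
      Aminus J ks (SClos J Φ₀) (SClos J Φ₁) a' := by
    intro φ hφ
    have hφV : φ ∈ SClos J Φ₀ := mem_SClos hφ
    have hφmid : φ ∈ ⋃ b ∈ ks, midAt J ks Φ₀ b := h₀.1.2.1 ▸ hφ
    simp only [Set.mem_iUnion] at hφmid
    obtain ⟨b, hb, hφb⟩ := hφmid
    have hsuppb := midAt_suppIn hφb
    rcases hs.2.2.2 b hb with hble | hage
    · rcases eq_or_lt_of_le hble with heq | hlt
      · -- b = a
        rw [heq] at hφb hsuppb
        set M := VbrevePred J ks (SClos J Φ₀) a ⊔ Vbreve J ks (SClos J Φ₀) a with hM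
        have hsplit : projL X φ = projL X (φ - projL M φ) + projL X (projL M φ) := by
          rw [← map_add]
          congr 1
          abel
        rw [hsplit]
        refine Submodule.add_mem _ (Submodule.mem_sup_left (Submodule.mem_sup_right ?_))
          (Submodule.mem_sup_left (Submodule.mem_sup_left ?_))
        · refine Submodule.mem_map.2 ⟨φ - projL M φ, ?_, rfl⟩
          refine Submodule.mem_map.2 ⟨φ, ⟨hφV, hsuppb⟩, ?_⟩
          rw [LinearMap.sub_apply, LinearMap.id_apply]
        · have hMc : M ≤ Submodule.comap (projL X) (Vbreve J ks (SClos J Φ₀) a) := by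
            intro m hm
            obtain ⟨u, hu, v, hv, rfl⟩ := Submodule.mem_sup.1 hm
            have hpu : projL X u = 0 := by
              refine projL_eq_zero fun g hg => ?_
              unfold VbrevePred at hu
              split_ifs at hu with hne
              · exact inner_eq_zero_of_suppIn hu.2 hg.2
                  (restrict_null_singleton (c := a) fun x hx =>
                    Set.mem_singleton_iff.2 (le_antisymm hx.1.2 hx.2.1))
              · rw [Submodule.mem_bot] at hu
                rw [hu]
                exact inner_zero_left g
            have hpv : projL X v = v := hmemX (h1 hv)
            have : projL X (u + v) = v := by rw [map_add, hpu, hpv, zero_add]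
            exact Submodule.mem_comap.2 (by rw [this]; exact hv)
          have hclc : IsClosed ((Submodule.comap (projL X)
              (Vbreve J ks (SClos J Φ₀) a) : Submodule ℝ (L2S J)) : Set (L2S J)) :=
            hVb₀cl.preimage (continuous_projL X)
          exact Submodule.topologicalClosure_minimal M hMc hclc (projL_mem M φ)
      · -- b < a : φ is supported to the left of a
        have hsuppIic : SuppIn J φ (Iic a) := hsuppb.mono fun x hx =>
          EReal.coe_le_coe_iff.1 (hx.2.trans (succE_le_s8 hs.1 hlt))
        have : projL X φ = 0 := projL_eq_zero fun g hg =>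
          inner_eq_zero_of_suppIn hsuppIic hg.2 (restrict_null_singleton (c := a)
            fun x hx => Set.mem_singleton_iff.2 (le_antisymm hx.1 hx.2.1))
        rw [this]
        exact Submodule.zero_mem _
    · rcases eq_or_lt_of_le hage with heq | hlt
      · -- b = a'
        rw [← heq] at hφb hsuppb
        set M' := VbrevePred J ks (SClos J Φ₀) a' ⊔ Vbreve J ks (SClos J Φ₀) a' with hM'
        have hsplit : projL X φ = projL X (φ - projL M' φ) + projL X (projL M' φ) := by
          rw [← map_add]
          congr 1
          abel
        rw [hsplit]
        refine Submodule.add_mem _ (Submodule.mem_sup_right ?_)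
          (Submodule.mem_sup_left (Submodule.mem_sup_left ?_))
        · rw [hAmin_eq]
          refine Submodule.mem_map.2 ⟨φ - projL M' φ, ?_, rfl⟩
          refine Submodule.mem_map.2 ⟨φ, ⟨hφV, hsuppb⟩, ?_⟩
          rw [LinearMap.sub_apply, LinearMap.id_apply]
        · have hMc : M' ≤ Submodule.comap (projL X) (Vbreve J ks (SClos J Φ₀) a) := by
            intro m hm
            obtain ⟨u, hu, v, hv, rfl⟩ := Submodule.mem_sup.1 hm
            rw [hP₀] at hu
            have hpu : projL X u = u := hmemX (h1 hu)
            have hpv : projL X v = 0 := by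
              refine projL_eq_zero fun g hg => ?_
              exact inner_eq_zero_of_suppIn hv.2 hg.2
                (restrict_null_singleton (c := a') fun x hx =>
                  Set.mem_singleton_iff.2 (le_antisymm
                    (EReal.coe_le_coe_iff.1 (hx.2.2.trans_eq hs.succE_eq)) hx.1.1))
            have : projL X (u + v) = u := by rw [map_add, hpu, hpv, add_zero]
            exact Submodule.mem_comap.2 (by rw [this]; exact hu)
          have hclc : IsClosed ((Submodule.comap (projL X)
              (Vbreve J ks (SClos J Φ₀) a) : Submodule ℝ (L2S J)) : Set (L2S J)) :=
            hVb₀cl.preimage (continuous_projL X)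
          exact Submodule.topologicalClosure_minimal M' hMc hclc (projL_mem M' φ)
      · -- a' < b
        have hsuppIci : SuppIn J φ (Ici a') := hsuppb.mono fun x hx =>
          EReal.coe_le_coe_iff.1 ((le_predE hs.2.1 hlt).trans hx.1)
        have : projL X φ = 0 := projL_eq_zero fun g hg =>
          inner_eq_zero_of_suppIn hsuppIci hg.2 (restrict_null_singleton (c := a')
            fun x hx => Set.mem_singleton_iff.2 (le_antisymm
              (EReal.coe_le_coe_iff.1 (hx.2.2.trans_eq hs.succE_eq)) hx.1))
        rw [this]
        exact Submodule.zero_mem _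
  have hle_sup : projSub X (SClos J Φ₀) ≤ Vbreve J ks (SClos J Φ₀) a ⊔
      Aplus J ks (SClos J Φ₀) (SClos J Φ₁) a ⊔
      Aminus J ks (SClos J Φ₀) (SClos J Φ₁) a' := by
    have hcomap : SClos J Φ₀ ≤ Submodule.comap (projL X)
        (Vbreve J ks (SClos J Φ₀) a ⊔ Aplus J ks (SClos J Φ₀) (SClos J Φ₁) a ⊔
          Aminus J ks (SClos J Φ₀) (SClos J Φ₁) a') := by
      refine Submodule.topologicalClosure_minimal _ ?_ ?_
      · rw [Submodule.span_le]
        intro φ hφ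
        exact hgen φ hφ
      · exact hRHScl.preimage (continuous_projL X)
    rintro f hf
    obtain ⟨y, hy, rfl⟩ := Submodule.mem_map.1 hf
    exact hcomap hy
  exact ⟨h1, h2, h3, hperp1, hperp2, hperp3, le_antisymm hle_sup hsup_le⟩
end
end
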